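/- arXiv:1305.0808 — 4 statements merged into one kernel-verified Lean document; each statement's English description precedes it below -/
import Mathlib

section
/- Fix d ≥ 2 and an integer r with r ∉ {1,2,4}. Every Markov cocycle M on X_r (not assumed shift-invariant) is the Gibbs cocycle of some nearest neighbor interaction φ (not necessarily shift-invariant): M = M_φ. In the notation of the paper, M_{X_r} = G_{X_r}. -/
open scoped BigOperators

/-- Sites of the standard Cayley graph of `ℤ^d`. -/
abbrev Site (d : ℕ) := Fin d → ℤ

/-- Adjacency in the standard Cayley graph of `ℤ^d`: `‖n - m‖₁ = 1`. -/
def adjacent {d : ℕ} (n m : Site d) : Prop :=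
  (∑ i, |n i - m i|) = 1

/-- The (outer) boundary of a set of sites. -/
def siteBdry {d : ℕ} (F : Set (Site d)) : Set (Site d) :=
  {m | m ∉ F ∧ ∃ n ∈ F, adjacent n m}

/-- The shift action of `ℤ^d` on configurations. -/
def shift {d : ℕ} {A : Type*} (n : Site d) (x : Site d → A) : Site d → A :=
  fun m => x (m + n)

/-- The nearest neighbor shift of finite type `X_r`. -/
def Xr (d r : ℕ) : Set (Site d → ZMod r) :=
  {x | ∀ n m : Site d, adjacent n m → x n - x m = 1 ∨ x n - x m = -1}

/-- A height function on `ℤ^d`. -/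
def IsHeightFn {d : ℕ} (h : Site d → ℤ) : Prop :=
  ∀ n m : Site d, adjacent n m → |h n - h m| = 1

/-- `h` is a height-function lift of the configuration `x ∈ (ℤ/rℤ)^{ℤ^d}`. -/
def LiftsTo {d r : ℕ} (h : Site d → ℤ) (x : Site d → ZMod r) : Prop :=
  IsHeightFn h ∧ ∀ n : Site d, ((h n : ZMod r)) = x n

/-- The homoclinic relation of `X`. -/
def DeltaOf {d : ℕ} {A : Type*} (X : Set (Site d → A)) :
    Set ((Site d → A) × (Site d → A)) :=
  {p | p.1 ∈ X ∧ p.2 ∈ X ∧ {n | p.1 n ≠ p.2 n}.Finite}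

/-- The cocycle condition for a function on the homoclinic relation. -/
def IsCocycle {d : ℕ} {A : Type*} (X : Set (Site d → A)) (M : ↥(DeltaOf X) → ℝ) : Prop :=
  ∀ (x y z : Site d → A) (hxy : (x, y) ∈ DeltaOf X)
    (hyz : (y, z) ∈ DeltaOf X) (hxz : (x, z) ∈ DeltaOf X),
    M ⟨(x, z), hxz⟩ = M ⟨(x, y), hxy⟩ + M ⟨(y, z), hyz⟩

/-- The Markov condition: if `x,y` agree outside the finite set `F`, then `M(x,y)` depends
only on the restrictions of `x` and `y` to `F ∪ ∂F`. -/
def IsMarkovProp {d : ℕ} {A : Type*} (X : Set (Site d → A)) (M : ↥(DeltaOf X) → ℝ) : Prop :=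
  ∀ (x y x' y' : Site d → A) (hxy : (x, y) ∈ DeltaOf X) (hxy' : (x', y') ∈ DeltaOf X)
    (F : Set (Site d)), F.Finite →
    (∀ n ∉ F, x n = y n) → (∀ n ∉ F, x' n = y' n) →
    (∀ n ∈ F ∪ siteBdry F, x n = x' n) → (∀ n ∈ F ∪ siteBdry F, y n = y' n) →
    M ⟨(x, y), hxy⟩ = M ⟨(x', y'), hxy'⟩

/-- Shift-invariance of a cocycle on the homoclinic relation. -/
def IsShiftInvCocycle {d : ℕ} {A : Type*} (X : Set (Site d → A)) (M : ↥(DeltaOf X) → ℝ) : Prop :=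
  ∀ (n : Site d) (x y : Site d → A) (hxy : (x, y) ∈ DeltaOf X)
    (hs : (shift n x, shift n y) ∈ DeltaOf X),
    M ⟨(shift n x, shift n y), hs⟩ = M ⟨(x, y), hxy⟩

/-- `N_i(a,b)`: the net number of crossings from `i + rℤ` to `i + 2 + rℤ` of a path from
`a` to `b` in steps of size `2`. -/
noncomputable def NiCount (r : ℕ) (i : ℤ) (a b : ℤ) : ℤ :=
  if a ≤ b then
    (((Finset.Ico a b).filter fun m => (m - a) % 2 = 0 ∧ (m - i) % (r : ℤ) = 0).card : ℤ)
  else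
    -(((Finset.Ico b a).filter fun m => (m - b) % 2 = 0 ∧ (m - i) % (r : ℤ) = 0).card : ℤ)

/-- The standard generator `e_j` of `ℤ^d`. -/
def unitVec {d : ℕ} (j : Fin d) : Site d := Pi.single j 1

/-- The Gibbs cocycle `M_φ(x,y)` of a (not necessarily shift-invariant) nearest neighbor
interaction `φ`, given by vertex weights `fv n a` (at site `n`) and edge weights
`fe n j a b` (on the edge `(n, n + e_j)` with values `a` at `n` and `b` at `n + e_j`). -/
noncomputable def gibbsDiff {d r : ℕ} (fv : Site d → ZMod r → ℝ)
    (fe : Site d → Fin d → ZMod r → ZMod r → ℝ)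
    (x y : Site d → ZMod r) : ℝ :=
  (∑ᶠ n : Site d, (fv n (y n) - fv n (x n))) +
  ∑ᶠ n : Site d, ∑ j : Fin d,
    (fe n j (y n) (y (n + unitVec j)) - fe n j (x n) (x (n + unitVec j)))

namespace MCXr

variable {d r : ℕ}

theorem adj_symm {n m : Site d} (h : adjacent n m) : adjacent m n := by
  unfold adjacent at *
  rw [Finset.sum_congr rfl (fun i _ => abs_sub_comm (m i) (n i))]
  exact h

theorem adj_irrefl (n : Site d) : ¬ adjacent n n := by
  simp [adjacent]

theorem adj_single (n : Site d) (j : Fin d) {σ : ℤ} (hσ : σ = 1 ∨ σ = -1) :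
    adjacent (n + Pi.single j σ) n := by
  unfold adjacent
  have h1 : ∀ i : Fin d, |((n + Pi.single j σ : Site d)) i - n i| = if i = j then (1:ℤ) else 0 := by
    intro i
    by_cases h : i = j
    · subst h; rcases hσ with rfl | rfl <;> simp
    · simp [Pi.single_apply, h]
  rw [Finset.sum_congr rfl (fun i _ => h1 i)]
  simp

theorem adj_decomp {n m : Site d} (h : adjacent n m) :
    ∃ (j : Fin d) (σ : ℤ), (σ = 1 ∨ σ = -1) ∧ n = m + Pi.single j σ := by
  unfold adjacent at h
  have hne : ∃ k, n k ≠ m k := by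
    by_contra hc
    push_neg at hc
    rw [Finset.sum_congr rfl (fun i _ => by rw [hc i, sub_self, abs_zero])] at h
    simp at h
  obtain ⟨k, hk⟩ := hne
  have h1 : |n k - m k| ≤ 1 := by
    rw [← h]
    exact Finset.single_le_sum (f := fun i => |n i - m i|) (fun i _ => abs_nonneg _)
      (Finset.mem_univ k)
  have h2 : |n k - m k| = 1 := by
    simp only [Int.abs_eq_natAbs] at h1 ⊢
    omega
  have h3 : ∀ i, i ≠ k → n i = m i := by
    intro i hi
    have hrest : ∑ x ∈ Finset.univ.erase k, |n x - m x| = 0 := by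
      have h4 := Finset.add_sum_erase Finset.univ (fun i => |n i - m i|) (Finset.mem_univ k)
      linarith
    have h5 := (Finset.sum_eq_zero_iff_of_nonneg (fun i _ => abs_nonneg _)).mp hrest i
      (Finset.mem_erase.mpr ⟨hi, Finset.mem_univ i⟩)
    exact sub_eq_zero.mp (abs_eq_zero.mp h5)
  refine ⟨k, n k - m k, ?_, ?_⟩
  · rcases abs_eq (by norm_num : (0:ℤ) ≤ 1) |>.mp h2 with h | h
    · exact Or.inl h
    · exact Or.inr h
  · funext i
    by_cases hik : i = k
    · subst hik; simp [Pi.single_apply]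
    · simp [Pi.single_apply, hik, h3 i hik]

theorem single_ne_zero' (j : Fin d) : (Pi.single j (1:ℤ) : Site d) ≠ 0 := by
  intro h
  have := congrFun h j
  simp at this

-- r facts
theorem two_nz (hr3 : 3 ≤ r) : (2 : ZMod r) ≠ 0 := by
  haveI : NeZero r := ⟨by omega⟩
  intro h
  have h2 : ((2:ℕ) : ZMod r) = 0 := by exact_mod_cast h
  have := (ZMod.natCast_eq_zero_iff 2 r).mp h2
  have := Nat.le_of_dvd (by norm_num) this
  omega

theorem one_ne_negone (hr3 : 3 ≤ r) : (1 : ZMod r) ≠ -1 := by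
  intro h
  exact two_nz hr3 (by linear_combination h)

theorem not_dvd_two (hr3 : 3 ≤ r) : ¬ ((r:ℤ) ∣ 2) := by
  intro h
  have := Int.le_of_dvd (by norm_num) h
  omega

theorem not_dvd_four (hr3 : 3 ≤ r) (hr4 : r ≠ 4) : ¬ ((r:ℤ) ∣ 4) := by
  intro h
  have h1 := Int.le_of_dvd (by norm_num) h
  have : r = 3 := by omega
  subst this
  norm_num at h

-- eps
def eps (x : Site d → ZMod r) (n m : Site d) : ℤ := if x n - x m = 1 then 1 else -1

theorem eps_pm (x : Site d → ZMod r) (n m : Site d) : eps x n m = 1 ∨ eps x n m = -1 := by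
  unfold eps; split <;> simp

theorem eps_cast (hr3 : 3 ≤ r) {x : Site d → ZMod r} (hx : x ∈ Xr d r) {n m : Site d}
    (h : adjacent n m) : ((eps x n m : ℤ) : ZMod r) = x n - x m := by
  unfold eps
  rcases hx n m h with h1 | h1 <;> rw [h1]
  · simp
  · rw [if_neg (fun hc => one_ne_negone hr3 hc.symm)]
    push_cast
    ring

theorem eps_antisymm (hr3 : 3 ≤ r) {x : Site d → ZMod r} (hx : x ∈ Xr d r) {n m : Site d}
    (h : adjacent n m) : eps x m n = - eps x n m := by
  unfold eps
  rcases hx n m h with h1 | h1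
  · have h2 : x m - x n = -1 := by linear_combination -h1
    rw [h1, h2, if_pos rfl, if_neg (fun hc => one_ne_negone hr3 hc.symm)]
  · have h2 : x m - x n = 1 := by linear_combination -h1
    rw [h1, h2, if_pos rfl, if_neg (fun hc => one_ne_negone hr3 hc.symm)]
    norm_num

theorem eps_congr {x y : Site d → ZMod r} {a b : Site d} (ha : x a = y a) (hb : x b = y b) :
    eps x a b = eps y a b := by
  unfold eps; rw [ha, hb]

theorem pm_sum_zero (hr3 : 3 ≤ r) (hr4 : r ≠ 4) {a b c e : ℤ}
    (ha : a = 1 ∨ a = -1) (hb : b = 1 ∨ b = -1) (hc : c = 1 ∨ c = -1) (he : e = 1 ∨ e = -1)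
    (hdvd : (r : ℤ) ∣ (a + b + c + e)) : a + b + c + e = 0 := by
  have d2 := not_dvd_two hr3
  have d4 := not_dvd_four hr3 hr4
  rcases ha with rfl | rfl <;> rcases hb with rfl | rfl <;> rcases hc with rfl | rfl <;>
    rcases he with rfl | rfl <;> norm_num at hdvd ⊢ <;>
    first
      | (exact absurd hdvd d2)
      | (exact absurd hdvd d4)

end MCXr
namespace MCXr

variable {d r : ℕ}

theorem plaquette (hr3 : 3 ≤ r) (hr4 : r ≠ 4) {x : Site d → ZMod r} (hx : x ∈ Xr d r)
    {j k : Fin d} (hkj : k ≠ j) (q : Site d) :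
    eps x (q + Pi.single k 1 + Pi.single j 1) (q + Pi.single k 1) + eps x (q + Pi.single k 1) q
      = eps x (q + Pi.single k 1 + Pi.single j 1) (q + Pi.single j 1)
        + eps x (q + Pi.single j 1) q := by
  haveI : NeZero r := ⟨by omega⟩
  have A1 : adjacent (q + Pi.single k 1 + Pi.single j 1) (q + Pi.single k 1) :=
    adj_single (q + Pi.single k 1) j (Or.inl rfl)
  have A2 : adjacent (q + Pi.single k 1) q := adj_single q k (Or.inl rfl)
  have hcomm : q + Pi.single k (1:ℤ) + Pi.single j 1 = q + Pi.single j 1 + Pi.single k 1 :=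
    add_right_comm q _ _
  have A3 : adjacent (q + Pi.single k 1 + Pi.single j 1) (q + Pi.single j 1) := by
    rw [hcomm]; exact adj_single (q + Pi.single j 1) k (Or.inl rfl)
  have A4 : adjacent (q + Pi.single j 1) q := adj_single q j (Or.inl rfl)
  set a := eps x (q + Pi.single k 1 + Pi.single j 1) (q + Pi.single k 1) with ha
  set b := eps x (q + Pi.single k 1) q with hb
  set c := eps x (q + Pi.single k 1 + Pi.single j 1) (q + Pi.single j 1) with hc
  set e := eps x (q + Pi.single j 1) q with he
  have hcast : ((a + b + (-c) + (-e) : ℤ) : ZMod r) = 0 := by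
    push_cast
    rw [ha, hb, hc, he, eps_cast hr3 hx A1, eps_cast hr3 hx A2, eps_cast hr3 hx A3,
      eps_cast hr3 hx A4]
    ring
  have hdvd : (r:ℤ) ∣ (a + b + (-c) + (-e)) := (ZMod.intCast_zmod_eq_zero_iff_dvd _ r).mp hcast
  have hz := pm_sum_zero hr3 hr4 (eps_pm x _ _) (eps_pm x _ _)
    (by rcases eps_pm x (q + Pi.single k 1 + Pi.single j 1) (q + Pi.single j 1) with h | h <;>
      rw [← hc] at h <;> omega)
    (by rcases eps_pm x (q + Pi.single j 1) q with h | h <;> rw [← he] at h <;> omega) hdvd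
  linarith

def Ipos (x : Site d → ZMod r) (p : Site d) (j : Fin d) : ℕ → ℤ
  | 0 => 0
  | k+1 => Ipos x p j k + eps x (p + Pi.single j ((k:ℤ)+1)) (p + Pi.single j (k:ℤ))

def Ineg (x : Site d → ZMod r) (p : Site d) (j : Fin d) : ℕ → ℤ
  | 0 => 0
  | k+1 => Ineg x p j k - eps x (p + Pi.single j (-(k:ℤ))) (p + Pi.single j (-(k:ℤ)-1))

def axisI (x : Site d → ZMod r) (p : Site d) (j : Fin d) (b : ℤ) : ℤ :=
  if 0 ≤ b then Ipos x p j b.toNat else Ineg x p j b.natAbs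

theorem axisI_step (x : Site d → ZMod r) (p : Site d) (j : Fin d) (b : ℤ) :
    axisI x p j (b+1) = axisI x p j b + eps x (p + Pi.single j (b+1)) (p + Pi.single j b) := by
  rcases lt_trichotomy b (-1) with hb | hb | hb
  · have h1 : ¬ (0:ℤ) ≤ b := by omega
    have h2 : ¬ (0:ℤ) ≤ b + 1 := by omega
    rw [axisI, axisI, if_neg h2, if_neg h1]
    obtain ⟨m, hm⟩ : ∃ m : ℕ, b.natAbs = m + 2 := ⟨b.natAbs - 2, by omega⟩
    have hb2 : b = -(m:ℤ) - 2 := by omega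
    have e2 : b = -((m:ℤ)+1) - 1 := by omega
    have hm1 : (b+1).natAbs = m + 1 := by omega
    rw [hm, hm1]
    show Ineg x p j (m+1) = Ineg x p j (m+2) + _
    have : Ineg x p j (m+2) = Ineg x p j (m+1)
        - eps x (p + Pi.single j (-((m:ℤ)+1))) (p + Pi.single j (-((m:ℤ)+1)-1)) := by
      show Ineg x p j (m+1+1) = _
      rw [Ineg]
      push_cast
      ring_nf
    rw [this]
    have e3 : b + 1 = -((m:ℤ)+1) := by omega
    rw [e3, e2]
    ring
  · subst hb
    have h1 : ¬ (0:ℤ) ≤ (-1:ℤ) := by norm_num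
    have h2 : (0:ℤ) ≤ (-1:ℤ) + 1 := by norm_num
    rw [axisI, axisI, if_pos h2, if_neg h1]
    norm_num
    show (0:ℤ) = Ineg x p j 1 + _
    have : Ineg x p j 1 = - eps x (p + Pi.single j (-(0:ℤ))) (p + Pi.single j (-(0:ℤ)-1)) := by
      show Ineg x p j (0+1) = _
      rw [Ineg, Ineg]
      ring
    rw [this]
    norm_num
  · have h1 : (0:ℤ) ≤ b := by omega
    have h2 : (0:ℤ) ≤ b + 1 := by omega
    rw [axisI, axisI, if_pos h2, if_pos h1]
    obtain ⟨m, hm⟩ : ∃ m : ℕ, b = (m:ℤ) := ⟨b.toNat, by omega⟩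
    subst hm
    have e1 : ((m:ℤ)+1).toNat = m + 1 := by omega
    have e2 : ((m:ℤ)).toNat = m := by omega
    rw [e1, e2, Ipos]

theorem ladder (hr3 : 3 ≤ r) (hr4 : r ≠ 4) {x : Site d → ZMod r} (hx : x ∈ Xr d r)
    {j k : Fin d} (hkj : k ≠ j) (p : Site d) (b : ℤ) :
    axisI x (p + Pi.single k 1) j b - axisI x p j b
      = eps x (p + Pi.single k 1 + Pi.single j b) (p + Pi.single j b)
        - eps x (p + Pi.single k 1) p := by
  induction b using Int.induction_on with
  | zero => simp [axisI, Ipos]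
  | succ b ih =>
      rw [axisI_step, axisI_step]
      have P := plaquette hr3 hr4 hx hkj (p + Pi.single j (b:ℤ))
      have E1 : p + Pi.single j (b:ℤ) + Pi.single k 1 + Pi.single j 1
          = p + Pi.single k 1 + Pi.single j ((b:ℤ)+1) := by
        rw [Pi.single_add]; abel
      have E2 : p + Pi.single j (b:ℤ) + Pi.single k 1 = p + Pi.single k 1 + Pi.single j (b:ℤ) :=
        add_right_comm p _ _
      have E3 : p + Pi.single j (b:ℤ) + Pi.single j 1 = p + Pi.single j ((b:ℤ)+1) := by
        rw [Pi.single_add]; abel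
      rw [E1, E2, E3] at P
      linarith
  | pred b ih =>
      have S1 := axisI_step x (p + Pi.single k 1) j (-(b:ℤ)-1)
      have S2 := axisI_step x p j (-(b:ℤ)-1)
      have e0 : (-(b:ℤ)-1) + 1 = -(b:ℤ) := by ring
      rw [e0] at S1 S2
      have P := plaquette hr3 hr4 hx hkj (p + Pi.single j (-(b:ℤ)-1))
      have E1 : p + Pi.single j (-(b:ℤ)-1) + Pi.single k 1 + Pi.single j 1
          = p + Pi.single k 1 + Pi.single j (-(b:ℤ)) := by
        have : (-(b:ℤ)) = (-(b:ℤ)-1) + 1 := by ring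
        rw [this, Pi.single_add]; abel
      have E2 : p + Pi.single j (-(b:ℤ)-1) + Pi.single k 1
          = p + Pi.single k 1 + Pi.single j (-(b:ℤ)-1) := add_right_comm p _ _
      have E3 : p + Pi.single j (-(b:ℤ)-1) + Pi.single j 1 = p + Pi.single j (-(b:ℤ)) := by
        have : (-(b:ℤ)) = (-(b:ℤ)-1) + 1 := by ring
        rw [this, Pi.single_add]; abel
      rw [E1, E2, E3] at P
      linarith

end MCXr
namespace MCXr

variable {d r : ℕ}

def Pfun (J : ℕ) (n : Site d) : Site d := fun i => if (i : ℕ) < J then n i else 0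

theorem Pfun_zero (n : Site d) : Pfun 0 n = 0 := by
  funext i; simp [Pfun]

theorem Pfun_ge {J : ℕ} (n : Site d) (h : d ≤ J) : Pfun J n = n := by
  funext i; simp [Pfun, lt_of_lt_of_le i.isLt h]

theorem Pfun_succ (J : ℕ) (hJ : J < d) (n : Site d) :
    Pfun (J+1) n = Pfun J n + Pi.single (⟨J, hJ⟩ : Fin d) (n ⟨J, hJ⟩) := by
  funext i
  simp only [Pfun, Pi.add_apply, Pi.single_apply]
  by_cases h1 : (i:ℕ) < J
  · rw [if_pos (by omega), if_pos h1, if_neg (by intro hc; rw [hc] at h1; simp at h1), add_zero]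
  · by_cases h2 : (i:ℕ) = J
    · have hi : i = ⟨J, hJ⟩ := Fin.ext h2
      rw [if_pos (by omega), if_neg h1, if_pos hi, zero_add, hi]
    · rw [if_neg (by omega), if_neg h1, if_neg (by intro hc; subst hc; simp at h2), add_zero]

theorem Pfun_add_single_ge {J : ℕ} {k : Fin d} (h : J ≤ (k:ℕ)) (n : Site d) (σ : ℤ) :
    Pfun J (n + Pi.single k σ) = Pfun J n := by
  funext i
  simp only [Pfun]
  by_cases h1 : (i:ℕ) < J
  · rw [if_pos h1, if_pos h1]
    have : i ≠ k := by intro hc; subst hc; omega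
    simp [Pi.single_apply, this]
  · rw [if_neg h1, if_neg h1]

theorem Pfun_add_single_lt {J : ℕ} {k : Fin d} (h : (k:ℕ) < J) (n : Site d) (σ : ℤ) :
    Pfun J (n + Pi.single k σ) = Pfun J n + Pi.single k σ := by
  funext i
  simp only [Pfun, Pi.add_apply]
  by_cases h1 : (i:ℕ) < J
  · rw [if_pos h1, if_pos h1]
  · rw [if_neg h1, if_neg h1]
    have : i ≠ k := by intro hc; subst hc; omega
    simp [Pi.single_apply, this]

def heightOf (x : Site d → ZMod r) (n : Site d) : ℤ :=
  ∑ j : Fin d, axisI x (Pfun (j:ℕ) n) j (n j)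

theorem heightOf_zero (x : Site d → ZMod r) : heightOf x 0 = 0 := by
  unfold heightOf
  have : ∀ j : Fin d, axisI x (Pfun (j:ℕ) (0 : Site d)) j ((0 : Site d) j) = 0 := by
    intro j
    have : ((0 : Site d) j) = 0 := rfl
    rw [this]
    simp [axisI, Ipos]
  rw [Finset.sum_congr rfl (fun j _ => this j)]
  simp

def Tfun (x : Site d → ZMod r) (n : Site d) (k : Fin d) (J : ℕ) : ℤ :=
  eps x (Pfun J n + Pi.single k 1) (Pfun J n)

def Efun (x : Site d → ZMod r) (n : Site d) (k : Fin d) (J : ℕ) : ℤ :=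
  if J < (k:ℕ) then 0 else if J = (k:ℕ) then Tfun x n k ((k:ℕ)+1)
  else Tfun x n k (J+1) - Tfun x n k J

theorem Efun_lt {x : Site d → ZMod r} {n : Site d} {k : Fin d} {J : ℕ} (h : J < (k:ℕ)) :
    Efun x n k J = 0 := by
  unfold Efun; rw [if_pos h]

theorem Efun_eq (x : Site d → ZMod r) (n : Site d) (k : Fin d) :
    Efun x n k (k:ℕ) = Tfun x n k ((k:ℕ)+1) := by
  unfold Efun; rw [if_neg (lt_irrefl _), if_pos rfl]

theorem Efun_gt {x : Site d → ZMod r} {n : Site d} {k : Fin d} {J : ℕ} (h : (k:ℕ) < J) :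
    Efun x n k J = Tfun x n k (J+1) - Tfun x n k J := by
  unfold Efun; rw [if_neg (by omega), if_neg (by omega)]

theorem heightOf_step (hr3 : 3 ≤ r) (hr4 : r ≠ 4) {x : Site d → ZMod r} (hx : x ∈ Xr d r)
    (n : Site d) (k : Fin d) :
    heightOf x (n + Pi.single k 1) = heightOf x n + eps x (n + Pi.single k 1) n := by
  classical
  have hterm : ∀ j : Fin d,
      axisI x (Pfun (j:ℕ) (n + Pi.single k 1)) j ((n + Pi.single k 1 : Site d) j)
        - axisI x (Pfun (j:ℕ) n) j (n j) = Efun x n k (j:ℕ) := by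
    intro j
    rcases lt_trichotomy (j:ℕ) (k:ℕ) with hjk | hjk | hjk
    · -- j < k
      have hne : j ≠ k := by intro hc; subst hc; omega
      rw [Pfun_add_single_ge (by omega) n 1]
      have h1 : (n + Pi.single k 1 : Site d) j = n j := by simp [Pi.single_apply, hne]
      rw [h1, sub_self, Efun_lt hjk]
    · -- j = k
      have hjk' : j = k := Fin.ext hjk
      subst hjk'
      rw [Pfun_add_single_ge (le_of_eq hjk) n 1]
      have h1 : (n + Pi.single j 1 : Site d) j = n j + 1 := by simp
      rw [h1, axisI_step]
      have h2 : Pfun ((j:ℕ)+1) n = Pfun (j:ℕ) n + Pi.single j (n j) := by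
        have := Pfun_succ (j:ℕ) j.isLt n
        simpa using this
      have h3 : Pfun (j:ℕ) n + Pi.single j (n j + 1)
          = Pfun ((j:ℕ)+1) n + Pi.single j 1 := by
        rw [h2, Pi.single_add]; abel
      have h4 : Pfun (j:ℕ) n + Pi.single j (n j) = Pfun ((j:ℕ)+1) n := h2.symm
      rw [h3, h4, Efun_eq]
      unfold Tfun
      ring
    · -- k < j
      have hne : j ≠ k := by intro hc; subst hc; omega
      have hkj : k ≠ j := fun hc => hne hc.symm
      rw [Pfun_add_single_lt hjk n 1]
      have h1 : (n + Pi.single k 1 : Site d) j = n j := by simp [Pi.single_apply, hne]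
      rw [h1]
      have L := ladder hr3 hr4 hx hkj (Pfun (j:ℕ) n) (n j)
      have h2 : Pfun ((j:ℕ)+1) n = Pfun (j:ℕ) n + Pi.single j (n j) := by
        have := Pfun_succ (j:ℕ) j.isLt n
        simpa using this
      have h3 : Pfun (j:ℕ) n + Pi.single k 1 + Pi.single j (n j)
          = Pfun ((j:ℕ)+1) n + Pi.single k 1 := by rw [h2]; abel
      have h4 : Pfun (j:ℕ) n + Pi.single j (n j) = Pfun ((j:ℕ)+1) n := h2.symm
      rw [h3, h4] at L
      rw [L, Efun_gt hjk]
      unfold Tfun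
      ring
  have hsum : heightOf x (n + Pi.single k 1) - heightOf x n = ∑ j : Fin d, Efun x n k (j:ℕ) := by
    unfold heightOf
    rw [← Finset.sum_sub_distrib]
    exact Finset.sum_congr rfl (fun j _ => hterm j)
  have hrange : ∑ j : Fin d, Efun x n k (j:ℕ) = ∑ J ∈ Finset.range d, Efun x n k J :=
    Fin.sum_univ_eq_sum_range (Efun x n k) d
  have htel : ∀ D : ℕ, (k:ℕ) < D → ∑ J ∈ Finset.range D, Efun x n k J = Tfun x n k D := by
    intro D
    induction D with
    | zero => intro h; exact absurd h (by omega)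
    | succ D ih =>
        intro hD
        rcases Nat.lt_or_ge (k:ℕ) D with h | h
        · rw [Finset.sum_range_succ, ih h, Efun_gt h]; ring
        · have hDk : D = (k:ℕ) := by omega
          subst hDk
          rw [Finset.sum_range_succ,
            Finset.sum_eq_zero (fun J hJ => Efun_lt (Finset.mem_range.mp hJ)),
            Efun_eq, zero_add]
  have hTd : Tfun x n k d = eps x (n + Pi.single k 1) n := by
    unfold Tfun
    rw [Pfun_ge n (le_refl d)]
  have hfin := htel d k.isLt
  rw [hrange, hfin, hTd] at hsum
  linarith

theorem heightOf_grad (hr3 : 3 ≤ r) (hr4 : r ≠ 4) {x : Site d → ZMod r} (hx : x ∈ Xr d r)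
    {n m : Site d} (h : adjacent n m) : heightOf x n - heightOf x m = eps x n m := by
  obtain ⟨j, σ, hσ, hnm⟩ := adj_decomp h
  rcases hσ with rfl | rfl
  · subst hnm
    rw [heightOf_step hr3 hr4 hx m j]
    ring
  · have hmn : m = n + Pi.single j 1 := by
      rw [hnm]
      funext i
      by_cases hij : i = j
      · subst hij; simp
      · simp [Pi.single_apply, hij]
    rw [hmn, heightOf_step hr3 hr4 hx n j]
    have ha : adjacent (n + Pi.single j 1) n := adj_single n j (Or.inl rfl)
    rw [eps_antisymm hr3 hx ha]
    have : m = n + Pi.single j 1 := hmn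
    rw [← hmn]
    ring

theorem heightOf_isHeight (hr3 : 3 ≤ r) (hr4 : r ≠ 4) {x : Site d → ZMod r} (hx : x ∈ Xr d r) :
    IsHeightFn (heightOf x) := by
  intro n m h
  rw [heightOf_grad hr3 hr4 hx h]
  rcases eps_pm x n m with h1 | h1 <;> rw [h1] <;> norm_num

end MCXr
namespace MCXr

variable {d r : ℕ}

def proj (g : Site d → ℤ) (c : ZMod r) : Site d → ZMod r := fun n => c + (g n : ZMod r)

theorem hf_pm {g : Site d → ℤ} (hg : IsHeightFn g) {n m : Site d} (h : adjacent n m) :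
    g n - g m = 1 ∨ g n - g m = -1 :=
  abs_eq (by norm_num : (0:ℤ) ≤ 1) |>.mp (hg n m h)

theorem proj_mem {g : Site d → ℤ} (hg : IsHeightFn g) (c : ZMod r) : proj g c ∈ Xr d r := by
  intro n m h
  have : proj g c n - proj g c m = ((g n - g m : ℤ) : ZMod r) := by
    unfold proj; push_cast; ring
  rw [this]
  rcases hf_pm hg h with h1 | h1 <;> rw [h1]
  · left; norm_num
  · right; norm_num

theorem const_of_step {A : Type*} (f : Site d → A)
    (hf : ∀ (n : Site d) (k : Fin d), f (n + Pi.single k 1) = f n) : ∀ n, f n = f 0 := by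
  suffices H : ∀ (N : ℕ) (n : Site d), (∑ i, (n i).natAbs) ≤ N → f n = f 0 by
    exact fun n => H _ n le_rfl
  intro N
  induction N with
  | zero =>
      intro n hn
      have hz : ∀ i, (n i).natAbs = 0 := by
        intro i
        have h1 : (n i).natAbs ≤ ∑ i, (n i).natAbs :=
          Finset.single_le_sum (f := fun i => (n i).natAbs) (fun _ _ => Nat.zero_le _)
            (Finset.mem_univ i)
        omega
      have : n = 0 := funext fun i => Int.natAbs_eq_zero.mp (hz i)
      rw [this]
  | succ N ih =>
      intro n hn
      by_cases hz : n = 0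
      · rw [hz]
      · have hne : ∃ i, n i ≠ 0 := by
          by_contra hc
          push_neg at hc
          exact hz (funext hc)
        obtain ⟨i, hi⟩ := hne
        have hsplit : ∀ (n' : Site d), (∀ j, j ≠ i → n' j = n j) →
            (n' i).natAbs < (n i).natAbs → f n' = f 0 → True := fun _ _ _ _ => trivial
        have hsum : ∀ n' : Site d, (∀ j, j ≠ i → n' j = n j) →
            (∑ j, (n' j).natAbs) + (n i).natAbs = (∑ j, (n j).natAbs) + (n' i).natAbs := by
          intro n' hsame
          have h1 : (n' i).natAbs + ∑ j ∈ Finset.univ.erase i, (n' j).natAbs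
              = ∑ j, (n' j).natAbs :=
            Finset.add_sum_erase Finset.univ (fun j => (n' j).natAbs) (Finset.mem_univ i)
          have h2 : (n i).natAbs + ∑ j ∈ Finset.univ.erase i, (n j).natAbs
              = ∑ j, (n j).natAbs :=
            Finset.add_sum_erase Finset.univ (fun j => (n j).natAbs) (Finset.mem_univ i)
          have h3 : ∑ j ∈ Finset.univ.erase i, (n' j).natAbs
              = ∑ j ∈ Finset.univ.erase i, (n j).natAbs :=
            Finset.sum_congr rfl (fun j hj => by rw [hsame j (Finset.mem_erase.mp hj).1])
          omega
        rcases lt_or_gt_of_ne hi with hneg | hpos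
        · -- n i < 0 : use n' := n + single i 1
          set n' := n + Pi.single i (1:ℤ) with hn'
          have hsame : ∀ j, j ≠ i → n' j = n j := by
            intro j hj; rw [hn']; simp [Pi.single_apply, hj]
          have hni : n' i = n i + 1 := by rw [hn']; simp
          have hstep : f n' = f n := hf n i
          have hmeas : (∑ j, (n' j).natAbs) ≤ N := by
            have hs := hsum n' hsame
            rw [hni] at hs
            omega
          rw [← hstep]
          exact ih n' hmeas
        · -- n i > 0 : n = (n - single i 1) + single i 1
          set n' := n - Pi.single i (1:ℤ) with hn'
          have hrec : n' + Pi.single i 1 = n := by rw [hn']; abel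
          have hsame : ∀ j, j ≠ i → n' j = n j := by
            intro j hj; rw [hn']; simp [Pi.single_apply, hj]
          have hni : n' i = n i - 1 := by rw [hn']; simp
          have hstep : f n = f n' := by rw [← hrec]; exact hf n' i
          have hmeas : (∑ j, (n' j).natAbs) ≤ N := by
            have hs := hsum n' hsame
            rw [hni] at hs
            omega
          rw [hstep]
          exact ih n' hmeas

theorem const_on_U {A : Type*} (hd : 2 ≤ d) (R : ℤ) (hR : 0 ≤ R) (f : Site d → A)
    (hf : ∀ (n : Site d) (k : Fin d) (σ : ℤ), (σ = 1 ∨ σ = -1) → (∃ i, R < |n i|) →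
      (∃ i, R < |(n + Pi.single k σ : Site d) i|) → f (n + Pi.single k σ) = f n) :
    ∀ n m : Site d, (∃ i, R < |n i|) → (∃ i, R < |m i|) → f n = f m := by
  haveI : Nontrivial (Fin d) :=
    ⟨⟨⟨0, by omega⟩, ⟨1, by omega⟩, by intro hc; simpa using congrArg Fin.val hc⟩⟩
  suffices H : ∀ (N : ℕ) (n : Site d), (∑ i, (n i - (R+1)).natAbs) ≤ N →
      (∃ i, R < |n i|) → f n = f (fun _ => R + 1) by
    intro n m hn hm
    rw [H _ n le_rfl hn, H _ m le_rfl hm]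
  intro N
  induction N with
  | zero =>
      intro n hn _
      have hz : ∀ i, (n i - (R+1)).natAbs = 0 := by
        intro i
        have h1 : (n i - (R+1)).natAbs ≤ ∑ i, (n i - (R+1)).natAbs :=
          Finset.single_le_sum (f := fun i => (n i - (R+1)).natAbs) (fun _ _ => Nat.zero_le _)
            (Finset.mem_univ i)
        omega
      have : n = (fun _ => R + 1) := funext fun i => by have := hz i; omega
      rw [this]
  | succ N ih =>
      intro n hn hU
      by_cases hz : n = (fun _ => R + 1)
      · rw [hz]
      · obtain ⟨i, hi⟩ := hU
        have hi' : R < n i ∨ n i < -R := by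
          simp only [Int.abs_eq_natAbs] at hi; omega
        have hmeas : ∀ (n' : Site d) (i' : Fin d), (∀ l, l ≠ i' → n' l = n l) →
            (n' i' - (R+1)).natAbs < (n i' - (R+1)).natAbs →
            (∑ l, (n' l - (R+1)).natAbs) ≤ N := by
          intro n' i' hsame hlt
          have h1 : (n' i' - (R+1)).natAbs + ∑ l ∈ Finset.univ.erase i', (n' l - (R+1)).natAbs
              = ∑ l, (n' l - (R+1)).natAbs :=
            Finset.add_sum_erase Finset.univ (fun l => (n' l - (R+1)).natAbs) (Finset.mem_univ i')
          have h2 : (n i' - (R+1)).natAbs + ∑ l ∈ Finset.univ.erase i', (n l - (R+1)).natAbs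
              = ∑ l, (n l - (R+1)).natAbs :=
            Finset.add_sum_erase Finset.univ (fun l => (n l - (R+1)).natAbs) (Finset.mem_univ i')
          have h3 : ∑ l ∈ Finset.univ.erase i', (n' l - (R+1)).natAbs
              = ∑ l ∈ Finset.univ.erase i', (n l - (R+1)).natAbs :=
            Finset.sum_congr rfl (fun l hl => by rw [hsame l (Finset.mem_erase.mp hl).1])
          omega
        by_cases hother : ∃ j, j ≠ i ∧ n j ≠ R + 1
        · obtain ⟨j, hji, hjval⟩ := hother
          have hσpm : (if n j < R + 1 then (1:ℤ) else -1) = 1 ∨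
              (if n j < R + 1 then (1:ℤ) else -1) = -1 := by split <;> simp
          set σ : ℤ := if n j < R + 1 then 1 else -1 with hσ
          set n' := n + Pi.single j σ with hn'
          have hsame : ∀ l, l ≠ j → n' l = n l := by
            intro l hl; rw [hn']; simp [Pi.single_apply, hl]
          have hnj : n' j = n j + σ := by rw [hn']; simp
          have hUn' : ∃ l, R < |n' l| := ⟨i, by rw [hsame i (fun hc => hji hc.symm)]; exact hi⟩
          have hstep : f n' = f n := hf n j σ hσpm ⟨i, hi⟩ hUn'
          have hlt : (n' j - (R+1)).natAbs < (n j - (R+1)).natAbs := by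
            rw [hnj, hσ]
            split <;> rename_i hc <;> omega
          rw [← hstep]
          exact ih n' (hmeas n' j hsame hlt) hUn'
        · push_neg at hother
          have hii : n i ≠ R + 1 := by
            intro hc
            apply hz
            funext l
            by_cases hl : l = i
            · rw [hl, hc]
            · exact hother l hl
          obtain ⟨j, hji⟩ := exists_ne i
          have hjval : n j = R + 1 := hother j hji
          rcases hi' with hgt | hlt
          · -- n i ≥ R+2 : move down
            have h2i : R + 2 ≤ n i := by omega
            set n' := n + Pi.single i (-1 : ℤ) with hn'
            have hsame : ∀ l, l ≠ i → n' l = n l := by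
              intro l hl; rw [hn']; simp [Pi.single_apply, hl]
            have hni : n' i = n i - 1 := by rw [hn']; simp; ring
            have hUn' : ∃ l, R < |n' l| := ⟨i, by
              rw [hni, abs_of_pos (by omega)]; omega⟩
            have hstep : f n' = f n := hf n i (-1) (Or.inr rfl) ⟨i, hi⟩ hUn'
            have hlt2 : (n' i - (R+1)).natAbs < (n i - (R+1)).natAbs := by
              rw [hni]; omega
            rw [← hstep]
            exact ih n' (hmeas n' i hsame hlt2) hUn'
          · -- n i ≤ -R-1 : move up, witness j
            set n' := n + Pi.single i (1 : ℤ) with hn'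
            have hsame : ∀ l, l ≠ i → n' l = n l := by
              intro l hl; rw [hn']; simp [Pi.single_apply, hl]
            have hni : n' i = n i + 1 := by rw [hn']; simp
            have hUn' : ∃ l, R < |n' l| := ⟨j, by
              rw [hsame j hji, hjval, abs_of_pos (by omega)]; omega⟩
            have hstep : f n' = f n := hf n i 1 (Or.inl rfl) ⟨i, hi⟩ hUn'
            have hlt2 : (n' i - (R+1)).natAbs < (n i - (R+1)).natAbs := by
              rw [hni]; omega
            rw [← hstep]
            exact ih n' (hmeas n' i hsame hlt2) hUn'

end MCXr
namespace MCXr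

variable {d r : ℕ}

theorem finite_box (R : ℤ) : {n : Site d | ∀ i, |n i| ≤ R}.Finite := by
  apply Set.Finite.subset (Set.Finite.pi (t := fun _ : Fin d => Set.Icc (-R) R)
    (fun _ => Set.finite_Icc _ _))
  intro n hn
  simp only [Set.mem_pi, Set.mem_univ, Set.mem_Icc, forall_true_left]
  intro i
  have := hn i
  constructor <;> [linarith [neg_abs_le (n i)]; linarith [le_abs_self (n i)]]

theorem exists_bound {s : Set (Site d)} (hs : s.Finite) :
    ∃ R : ℤ, 0 ≤ R ∧ ∀ n ∈ s, ∀ i, |n i| ≤ R := by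
  classical
  refine ⟨(hs.toFinset.sup fun n => Finset.univ.sup fun i => (n i).natAbs : ℕ), by positivity, ?_⟩
  intro n hn i
  have h1 : (n i).natAbs ≤ Finset.univ.sup fun i => (n i).natAbs :=
    Finset.le_sup (f := fun i => (n i).natAbs) (Finset.mem_univ i)
  have h2 : (Finset.univ.sup fun i => (n i).natAbs)
      ≤ hs.toFinset.sup fun n => Finset.univ.sup fun i => (n i).natAbs :=
    Finset.le_sup (f := fun n => Finset.univ.sup fun i => (n i).natAbs)
      (hs.mem_toFinset.mpr hn)
  rw [Int.abs_eq_natAbs]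
  exact_mod_cast le_trans h1 h2

theorem exists_notMem (hd : 2 ≤ d) {s : Set (Site d)} (hs : s.Finite) : ∃ q, q ∉ s := by
  have hinj : Function.Injective (fun t : ℤ => (fun _ => t : Site d)) := by
    intro a b hab
    exact congrFun hab ⟨0, by omega⟩
  haveI : Infinite (Site d) := Infinite.of_injective _ hinj
  obtain ⟨q, hq⟩ := (hs.infinite_compl).nonempty
  exact ⟨q, hq⟩

theorem even_diff (hd : 2 ≤ d) {h g : Site d → ℤ} (hh : IsHeightFn h) (hg : IsHeightFn g)
    (hfin : {n | h n ≠ g n}.Finite) : ∀ n, (2:ℤ) ∣ (g n - h n) := by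
  intro n
  set f : Site d → ZMod 2 := fun n => ((g n - h n : ℤ) : ZMod 2) with hfdef
  have hstep : ∀ (m : Site d) (k : Fin d), f (m + Pi.single k 1) = f m := by
    intro m k
    have hadj : adjacent (m + Pi.single k 1) m := adj_single m k (Or.inl rfl)
    have h1 := hf_pm hh hadj
    have h2 := hf_pm hg hadj
    have e1 : f (m + Pi.single k 1) - f m
        = ((g (m + Pi.single k 1) - g m : ℤ) : ZMod 2) - ((h (m + Pi.single k 1) - h m : ℤ) : ZMod 2) := by
      rw [hfdef]
      push_cast
      ring
    rcases h2 with h2 | h2 <;> rcases h1 with h1 | h1 <;> rw [h2, h1] at e1 <;>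
      exact sub_eq_zero.mp (by rw [e1]; decide)
  have hconst := const_of_step f hstep
  obtain ⟨q, hq⟩ := exists_notMem hd hfin
  have hq' : h q = g q := by
    by_contra hc
    exact hq hc
  have h0 : f q = 0 := by
    rw [hfdef]
    simp only
    rw [hq', sub_self]
    push_cast
    rfl
  have : f n = 0 := by rw [hconst n, ← hconst q, h0]
  have := (ZMod.intCast_zmod_eq_zero_iff_dvd _ 2).mp this
  exact_mod_cast this

theorem isHeight_update_down {g : Site d → ℤ} {n : Site d} (hg : IsHeightFn g)
    (hnb : ∀ m, adjacent n m → g m = g n - 1) :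
    IsHeightFn (Function.update g n (g n - 2)) := by
  intro p q hadj
  have hpq : p ≠ q := by intro hc; subst hc; exact adj_irrefl p hadj
  by_cases hp : p = n
  · subst hp
    have hq : q ≠ p := fun hc => hpq hc.symm
    rw [Function.update_self, Function.update_of_ne hq, hnb q hadj]
    norm_num
  · by_cases hq : q = n
    · subst hq
      rw [Function.update_of_ne hp, Function.update_self, hnb p (adj_symm hadj)]
      norm_num
    · rw [Function.update_of_ne hp, Function.update_of_ne hq]
      exact hg p q hadj

theorem isHeight_update_up {g : Site d → ℤ} {n : Site d} (hg : IsHeightFn g)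
    (hnb : ∀ m, adjacent n m → g m = g n + 1) :
    IsHeightFn (Function.update g n (g n + 2)) := by
  intro p q hadj
  have hpq : p ≠ q := by intro hc; subst hc; exact adj_irrefl p hadj
  by_cases hp : p = n
  · subst hp
    have hq : q ≠ p := fun hc => hpq hc.symm
    rw [Function.update_self, Function.update_of_ne hq, hnb q hadj]
    norm_num
  · by_cases hq : q = n
    · subst hq
      rw [Function.update_of_ne hp, Function.update_self, hnb p (adj_symm hadj)]
      norm_num
    · rw [Function.update_of_ne hp, Function.update_of_ne hq]
      exact hg p q hadj

/-- the canonical "cone" height function with apex at `n`. -/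
def coneH (n : Site d) : Site d → ℤ := fun m => -(∑ i, |m i - n i|)

theorem sum_abs_step (n q : Site d) (k : Fin d) {σ : ℤ} (hσ : σ = 1 ∨ σ = -1) :
    (∑ i, |(q + Pi.single k σ : Site d) i - n i|) - (∑ i, |q i - n i|) = 1 ∨
    (∑ i, |(q + Pi.single k σ : Site d) i - n i|) - (∑ i, |q i - n i|) = -1 := by
  set q' : Site d := q + Pi.single k σ with hq'
  have h1 : (|q' k - n k|) + ∑ i ∈ Finset.univ.erase k, |q' i - n i| = ∑ i, |q' i - n i| :=
    Finset.add_sum_erase Finset.univ (fun i => |q' i - n i|) (Finset.mem_univ k)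
  have h2 : (|q k - n k|) + ∑ i ∈ Finset.univ.erase k, |q i - n i| = ∑ i, |q i - n i| :=
    Finset.add_sum_erase Finset.univ (fun i => |q i - n i|) (Finset.mem_univ k)
  have h3 : ∑ i ∈ Finset.univ.erase k, |q' i - n i| = ∑ i ∈ Finset.univ.erase k, |q i - n i| := by
    apply Finset.sum_congr rfl
    intro i hi
    have : q' i = q i := by
      rw [hq']; simp [Pi.single_apply, (Finset.mem_erase.mp hi).1]
    rw [this]
  have h4 : q' k = q k + σ := by rw [hq']; simp
  have h5 : |q k + σ - n k| - |q k - n k| = 1 ∨ |q k + σ - n k| - |q k - n k| = -1 := by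
    simp only [Int.abs_eq_natAbs]
    rcases hσ with rfl | rfl <;> omega
  rw [h4] at h1
  omega

theorem coneH_isHeight (n : Site d) : IsHeightFn (coneH n) := by
  intro p q hadj
  obtain ⟨k, σ, hσ, hpq⟩ := adj_decomp hadj
  subst hpq
  unfold coneH
  have := sum_abs_step n q k hσ
  rcases this with h | h
  · rw [show -(∑ i, |(q + Pi.single k σ : Site d) i - n i|) - -(∑ i, |q i - n i|)
        = -((∑ i, |(q + Pi.single k σ : Site d) i - n i|) - (∑ i, |q i - n i|)) by ring, h]
    norm_num
  · rw [show -(∑ i, |(q + Pi.single k σ : Site d) i - n i|) - -(∑ i, |q i - n i|)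
        = -((∑ i, |(q + Pi.single k σ : Site d) i - n i|) - (∑ i, |q i - n i|)) by ring, h]
    norm_num

theorem coneH_self (n : Site d) : coneH n n = 0 := by
  unfold coneH
  rw [Finset.sum_eq_zero (fun i _ => by rw [sub_self, abs_zero])]
  norm_num

theorem coneH_nbr {n m : Site d} (hadj : adjacent n m) : coneH n m = -1 := by
  unfold coneH
  have : (∑ i, |m i - n i|) = 1 := by
    rw [← adj_symm hadj]
  rw [this]

/-- canonical local-max configuration at `n` with value `c`. -/
def xcfg (n : Site d) (c : ZMod r) : Site d → ZMod r := proj (coneH n) c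

def ycfg (n : Site d) (c : ZMod r) : Site d → ZMod r := Function.update (xcfg n c) n (c - 2)

theorem xcfg_self (n : Site d) (c : ZMod r) : xcfg n c n = c := by
  unfold xcfg proj
  rw [coneH_self]
  push_cast
  ring

theorem xcfg_nbr {n m : Site d} (hadj : adjacent n m) (c : ZMod r) : xcfg n c m = c - 1 := by
  unfold xcfg proj
  rw [coneH_nbr hadj]
  push_cast
  ring

theorem xcfg_mem (n : Site d) (c : ZMod r) : xcfg n c ∈ Xr d r :=
  proj_mem (coneH_isHeight n) c

theorem ycfg_eq_proj (n : Site d) (c : ZMod r) :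
    ycfg n c = proj (Function.update (coneH n) n (coneH n n - 2)) c := by
  funext m
  unfold ycfg proj
  by_cases hm : m = n
  · subst hm
    rw [Function.update_self, Function.update_self, coneH_self]
    push_cast
    ring
  · rw [Function.update_of_ne hm, Function.update_of_ne hm]
    rfl

theorem ycfg_mem (n : Site d) (c : ZMod r) : ycfg n c ∈ Xr d r := by
  rw [ycfg_eq_proj]
  apply proj_mem
  apply isHeight_update_down (coneH_isHeight n)
  intro m hadj
  rw [coneH_nbr hadj, coneH_self]
  norm_num

theorem flip_pair_mem (n : Site d) (c : ZMod r) : (xcfg n c, ycfg n c) ∈ DeltaOf (Xr d r) := by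
  refine ⟨xcfg_mem n c, ycfg_mem n c, ?_⟩
  apply Set.Finite.subset (Set.finite_singleton n)
  intro m hm
  simp only [Set.mem_setOf_eq] at hm
  by_contra hc
  apply hm
  unfold ycfg
  rw [Function.update_of_ne hc]

/-- The value of M on a downward flip at `n` from value `c` (all neighbors `c-1`). -/
noncomputable def psi (M : ↥(DeltaOf (Xr d r)) → ℝ) (n : Site d) (c : ZMod r) : ℝ :=
  M ⟨(xcfg n c, ycfg n c), flip_pair_mem n c⟩

theorem M_flip {M : ↥(DeltaOf (Xr d r)) → ℝ} (hM2 : IsMarkovProp (Xr d r) M)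
    {w : Site d → ZMod r} {n : Site d} {cv : ZMod r}
    (hwn : w n = cv) (hnb : ∀ m, adjacent n m → w m = cv - 1)
    (hmem : (w, Function.update w n (cv - 2)) ∈ DeltaOf (Xr d r)) :
    M ⟨(w, Function.update w n (cv - 2)), hmem⟩ = psi M n cv := by
  unfold psi
  apply hM2 w _ (xcfg n cv) (ycfg n cv) hmem (flip_pair_mem n cv) {n}
    (Set.finite_singleton n)
  · intro m hm
    have : m ≠ n := by simpa using hm
    rw [Function.update_of_ne this]
  · intro m hm
    have : m ≠ n := by simpa using hm
    unfold ycfg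
    rw [Function.update_of_ne this]
  · intro m hm
    rcases hm with hm | hm
    · have : m = n := by simpa using hm
      subst this
      rw [hwn, xcfg_self]
    · obtain ⟨hne, k, hk, hadj⟩ := hm
      have hkn : k = n := by simpa using hk
      rw [hkn] at hadj
      rw [hnb m hadj, xcfg_nbr hadj]
  · intro m hm
    rcases hm with hm | hm
    · have : m = n := by simpa using hm
      subst this
      unfold ycfg
      rw [Function.update_self, Function.update_self]
    · obtain ⟨hne, k, hk, hadj⟩ := hm
      have hkn : k = n := by simpa using hk
      rw [hkn] at hadj
      have hmn : m ≠ n := by simpa using hne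
      unfold ycfg
      rw [Function.update_of_ne hmn, Function.update_of_ne hmn, hnb m hadj, xcfg_nbr hadj]

end MCXr
namespace MCXr

variable {d r : ℕ}

def sitePt (j0 : Fin d) (b : Site d) (t : ℤ) : Site d := b + Pi.single j0 t

noncomputable def fpos (M : ↥(DeltaOf (Xr d r)) → ℝ) (j0 : Fin d) (b : Site d) :
    ℕ → ZMod r → ℝ
  | 0, _ => 0
  | (k+1), c => psi M (sitePt j0 b ((k:ℤ)+1)) (c+2) + fpos M j0 b k (c+1)

noncomputable def fneg (M : ↥(DeltaOf (Xr d r)) → ℝ) (j0 : Fin d) (b : Site d) :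
    ℕ → ZMod r → ℝ
  | 0, _ => 0
  | (k+1), c => fneg M j0 b k (c-1) - psi M (sitePt j0 b (-(k:ℤ))) (c+1)

noncomputable def Ufun (M : ↥(DeltaOf (Xr d r)) → ℝ) (j0 : Fin d) (b : Site d)
    (t : ℤ) (c : ZMod r) : ℝ :=
  if 0 ≤ t then fpos M j0 b t.toNat c else fneg M j0 b t.natAbs c

theorem Ufun_rec (M : ↥(DeltaOf (Xr d r)) → ℝ) (j0 : Fin d) (b : Site d) (t : ℤ) (c : ZMod r) :
    Ufun M j0 b t c = psi M (sitePt j0 b t) (c+2) + Ufun M j0 b (t-1) (c+1) := by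
  rcases lt_trichotomy t 0 with ht | ht | ht
  · have h1 : ¬ (0:ℤ) ≤ t := by omega
    have h2 : ¬ (0:ℤ) ≤ t - 1 := by omega
    obtain ⟨k, hk⟩ : ∃ k : ℕ, t = -(k:ℤ) := ⟨t.natAbs, by omega⟩
    have e1 : t.natAbs = k := by omega
    have e2 : (t-1).natAbs = k + 1 := by omega
    rw [Ufun, Ufun, if_neg h1, if_neg h2, e1, e2, fneg]
    have e3 : (c+1) - 1 = c := by ring
    have e4 : (c+1) + 1 = c + 2 := by ring
    have e5 : -(k:ℤ) = t := hk.symm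
    rw [e3, e4, e5]
    ring
  · subst ht
    have h1 : (0:ℤ) ≤ 0 := le_refl 0
    have h2 : ¬ (0:ℤ) ≤ (0:ℤ) - 1 := by norm_num
    rw [Ufun, Ufun, if_pos h1, if_neg h2]
    have e2 : ((0:ℤ)-1).natAbs = 0 + 1 := by norm_num
    rw [e2, fneg]
    show (0:ℝ) = _ + (fneg M j0 b 0 (c+1-1) - psi M (sitePt j0 b (-(0:ℕ):ℤ)) (c+1+1))
    have e3 : (c+1) - 1 = c := by ring
    have e4 : (c+1) + 1 = c + 2 := by ring
    have e5 : (-(0:ℕ):ℤ) = 0 := by norm_num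
    rw [e3, e4, e5, fneg]
    ring
  · have h1 : (0:ℤ) ≤ t := by omega
    have h2 : (0:ℤ) ≤ t - 1 := by omega
    obtain ⟨k, hk⟩ : ∃ k : ℕ, t = (k:ℤ) + 1 := ⟨(t-1).toNat, by omega⟩
    have e1 : t.toNat = k + 1 := by omega
    have e2 : (t-1).toNat = k := by omega
    rw [Ufun, Ufun, if_pos h1, if_pos h2, e1, e2, fpos]
    have e5 : ((k:ℕ):ℤ) + 1 = t := hk.symm
    rw [e5]

noncomputable def uW (M : ↥(DeltaOf (Xr d r)) → ℝ) (j0 : Fin d) (n : Site d) (c : ZMod r) : ℝ :=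
  Ufun M j0 (Function.update n j0 0) (n j0) c

theorem flip_eq (M : ↥(DeltaOf (Xr d r)) → ℝ) (j0 : Fin d) (n : Site d) (cv : ZMod r) :
    psi M n cv = uW M j0 n (cv - 2) - uW M j0 (n - Pi.single j0 1) (cv - 1) := by
  have hb : Function.update (n - Pi.single j0 1 : Site d) j0 0 = Function.update n j0 0 := by
    funext i
    by_cases hi : i = j0
    · subst hi; rw [Function.update_self, Function.update_self]
    · rw [Function.update_of_ne hi, Function.update_of_ne hi]
      simp [Pi.single_apply, hi]
  have ht : (n - Pi.single j0 1 : Site d) j0 = n j0 - 1 := by simp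
  have hpt : sitePt j0 (Function.update n j0 0) (n j0) = n := by
    funext i
    unfold sitePt
    by_cases hi : i = j0
    · subst hi; simp
    · simp [Pi.single_apply, hi, Function.update_of_ne hi]
  have hrec := Ufun_rec M j0 (Function.update n j0 0) (n j0) (cv - 2)
  rw [hpt] at hrec
  have e1 : cv - 2 + 2 = cv := by ring
  have e2 : cv - 2 + 1 = cv - 1 := by ring
  rw [e1, e2] at hrec
  unfold uW
  rw [hb, ht]
  linarith [hrec]

noncomputable def feI (M : ↥(DeltaOf (Xr d r)) → ℝ) (j0 : Fin d) (n : Site d) (j : Fin d)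
    (a b : ZMod r) : ℝ :=
  if j = j0 ∧ b = a + 1 then uW M j0 n a else 0

noncomputable def Fdiff (M : ↥(DeltaOf (Xr d r)) → ℝ) (j0 : Fin d)
    (x y : Site d → ZMod r) (n : Site d) : ℝ :=
  ∑ j : Fin d, (feI M j0 n j (y n) (y (n + unitVec j)) - feI M j0 n j (x n) (x (n + unitVec j)))

theorem gibbs_eq (M : ↥(DeltaOf (Xr d r)) → ℝ) (j0 : Fin d) (x y : Site d → ZMod r) :
    gibbsDiff (fun _ _ => (0:ℝ)) (feI M j0) x y = ∑ᶠ n, Fdiff M j0 x y n := by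
  unfold gibbsDiff Fdiff
  have h0 : (∑ᶠ _ : Site d, ((0:ℝ) - 0)) = 0 := by
    simp
  rw [h0, zero_add]

theorem Fdiff_support {M : ↥(DeltaOf (Xr d r)) → ℝ} {j0 : Fin d} {x y : Site d → ZMod r}
    (hfin : {n | x n ≠ y n}.Finite) :
    (Function.support (Fdiff M j0 x y)).Finite := by
  have hbig : ({n | x n ≠ y n} ∪
      ⋃ j : Fin d, (fun n : Site d => n + unitVec j) ⁻¹' {n | x n ≠ y n}).Finite := by
    apply Set.Finite.union hfin
    apply Set.finite_iUnion
    intro j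
    exact Set.Finite.preimage
      (Set.injOn_of_injective (add_left_injective (unitVec j)))
      hfin
  apply hbig.subset
  intro n hn
  rw [Function.mem_support] at hn
  obtain ⟨j, _, hj⟩ := Finset.exists_ne_zero_of_sum_ne_zero hn
  by_cases h1 : x n = y n
  · by_cases h2 : x (n + unitVec j) = y (n + unitVec j)
    · exfalso; apply hj; rw [h1, h2]; ring
    · exact Or.inr (Set.mem_iUnion.mpr ⟨j, h2⟩)
  · exact Or.inl h1

theorem gibbs_add (M : ↥(DeltaOf (Xr d r)) → ℝ) (j0 : Fin d) {x y z : Site d → ZMod r}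
    (hxy : {n | x n ≠ y n}.Finite) (hyz : {n | y n ≠ z n}.Finite) :
    gibbsDiff (fun _ _ => (0:ℝ)) (feI M j0) x z
      = gibbsDiff (fun _ _ => (0:ℝ)) (feI M j0) x y
        + gibbsDiff (fun _ _ => (0:ℝ)) (feI M j0) y z := by
  rw [gibbs_eq, gibbs_eq, gibbs_eq]
  have hpt : ∀ n, Fdiff M j0 x z n = Fdiff M j0 x y n + Fdiff M j0 y z n := by
    intro n
    unfold Fdiff
    rw [← Finset.sum_add_distrib]
    apply Finset.sum_congr rfl
    intro j _
    ring
  rw [finsum_congr hpt]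
  exact finsum_add_distrib (Fdiff_support hxy) (Fdiff_support hyz)

theorem gibbs_self (M : ↥(DeltaOf (Xr d r)) → ℝ) (j0 : Fin d) (x : Site d → ZMod r) :
    gibbsDiff (fun _ _ => (0:ℝ)) (feI M j0) x x = 0 := by
  rw [gibbs_eq]
  have hpt : ∀ n, Fdiff M j0 x x n = 0 := by
    intro n
    unfold Fdiff
    apply Finset.sum_eq_zero
    intro j _
    ring
  rw [finsum_congr hpt, finsum_zero]

theorem gibbs_congr (M : ↥(DeltaOf (Xr d r)) → ℝ) (j0 : Fin d) {x y x' y' : Site d → ZMod r}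
    (hx : x = x') (hy : y = y') :
    gibbsDiff (fun _ _ => (0:ℝ)) (feI M j0) x y
      = gibbsDiff (fun _ _ => (0:ℝ)) (feI M j0) x' y' := by
  subst hx; subst hy; rfl

theorem M_congr (M : ↥(DeltaOf (Xr d r)) → ℝ) {x y x' y' : Site d → ZMod r}
    (hx : x = x') (hy : y = y') (h1 : (x,y) ∈ DeltaOf (Xr d r))
    (h2 : (x',y') ∈ DeltaOf (Xr d r)) : M ⟨(x,y),h1⟩ = M ⟨(x',y'),h2⟩ := by
  subst hx; subst hy; rfl

theorem M_self {M : ↥(DeltaOf (Xr d r)) → ℝ} (hM1 : IsCocycle (Xr d r) M)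
    (x : Site d → ZMod r) (hmem : (x,x) ∈ DeltaOf (Xr d r)) : M ⟨(x,x),hmem⟩ = 0 := by
  have := hM1 x x x hmem hmem hmem
  linarith

theorem sub_single_add (n : Site d) (j0 : Fin d) :
    (n - Pi.single j0 1) + unitVec j0 = n := by
  unfold unitVec
  abel

theorem sub_single_eq_add_neg (n : Site d) (j0 : Fin d) :
    n - Pi.single j0 1 = n + Pi.single j0 (-1 : ℤ) := by
  funext i
  by_cases hi : i = j0
  · subst hi; simp; omega
  · simp [Pi.single_apply, hi]

theorem sub_single_ne (n : Site d) (j0 : Fin d) : n - Pi.single j0 1 ≠ n := by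
  intro hc
  have := congrFun hc j0
  simp at this

theorem add_unitVec_ne (n : Site d) (j : Fin d) : (n + unitVec j : Site d) ≠ n := by
  intro hc
  have := congrFun hc j
  simp [unitVec] at this

theorem G_flip (hr3 : 3 ≤ r) (M : ↥(DeltaOf (Xr d r)) → ℝ) (j0 : Fin d)
    {w : Site d → ZMod r} {n : Site d} {cv : ZMod r}
    (hwn : w n = cv) (hnb : ∀ m, adjacent n m → w m = cv - 1) :
    gibbsDiff (fun _ _ => (0:ℝ)) (feI M j0) w (Function.update w n (cv - 2)) = psi M n cv := by
  set w' := Function.update w n (cv - 2) with hw'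
  rw [gibbs_eq, flip_eq M j0 n cv]
  have hsupp : Function.support (Fdiff M j0 w w')
      ⊆ (({n, n - Pi.single j0 1} : Finset (Site d)) : Set (Site d)) := by
    intro m hm
    rw [Function.mem_support] at hm
    obtain ⟨j, -, hj⟩ := Finset.exists_ne_zero_of_sum_ne_zero hm
    by_cases hjj : j = j0
    · rw [hjj] at hj
      by_cases hm1 : m = n
      · simp [hm1]
      · by_cases hm2 : m + unitVec j0 = n
        · have hmeq : m = n - Pi.single j0 1 := by
            rw [← hm2]
            unfold unitVec
            abel
          simp [hmeq]
        · exfalso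
          apply hj
          have e1 : w' m = w m := Function.update_of_ne hm1 _ _
          have e2 : w' (m + unitVec j0) = w (m + unitVec j0) := Function.update_of_ne hm2 _ _
          rw [e1, e2]
          ring
    · exfalso
      apply hj
      unfold feI
      rw [if_neg (fun hc => hjj hc.1), if_neg (fun hc => hjj hc.1)]
      ring
  rw [finsum_eq_sum_of_support_subset _ hsupp,
    Finset.sum_pair (fun hc => sub_single_ne n j0 hc.symm)]
  have hFn : Fdiff M j0 w w' n = uW M j0 n (cv - 2) := by
    unfold Fdiff
    rw [Finset.sum_eq_single_of_mem j0 (Finset.mem_univ j0) ?_]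
    · have e1 : w' n = cv - 2 := Function.update_self _ _ _
      have e2 : w' (n + unitVec j0) = w (n + unitVec j0) :=
        Function.update_of_ne (add_unitVec_ne n j0) _ _
      have hadj : adjacent n (n + unitVec j0) := by
        have := adj_symm (adj_single n j0 (Or.inl rfl))
        exact this
      have e3 : w (n + unitVec j0) = cv - 1 := hnb _ hadj
      rw [e1, e2, e3, hwn]
      unfold feI
      rw [if_pos ⟨rfl, by ring⟩, if_neg ?_]
      · ring
      · rintro ⟨-, hc⟩
        exact two_nz hr3 (by linear_combination -hc)
    · intro j _ hjj
      unfold feI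
      rw [if_neg (fun hc => hjj hc.1), if_neg (fun hc => hjj hc.1)]
      ring
  have hFm : Fdiff M j0 w w' (n - Pi.single j0 1)
      = - uW M j0 (n - Pi.single j0 1) (cv - 1) := by
    unfold Fdiff
    rw [Finset.sum_eq_single_of_mem j0 (Finset.mem_univ j0) ?_]
    · have e1 : w' (n - Pi.single j0 1) = w (n - Pi.single j0 1) :=
        Function.update_of_ne (sub_single_ne n j0) _ _
      have hadj : adjacent n (n - Pi.single j0 1) := by
        rw [sub_single_eq_add_neg]
        exact adj_symm (adj_single n j0 (Or.inr rfl))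
      have e2 : w (n - Pi.single j0 1) = cv - 1 := hnb _ hadj
      rw [sub_single_add]
      have e3 : w' n = cv - 2 := Function.update_self _ _ _
      rw [e1, e2, e3, hwn]
      unfold feI
      rw [if_neg ?_, if_pos ⟨rfl, by ring⟩]
      · ring
      · rintro ⟨-, hc⟩
        exact two_nz hr3 (by linear_combination -hc)
    · intro j _ hjj
      unfold feI
      rw [if_neg (fun hc => hjj hc.1), if_neg (fun hc => hjj hc.1)]
      ring
  rw [hFn, hFm]
  ring

end MCXr
namespace MCXr

variable {d r : ℕ}

theorem proj_fin {c : ZMod r} {a b : Site d → ℤ} (hab : {m | a m ≠ b m}.Finite) :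
    {m | proj a c m ≠ proj b c m}.Finite := by
  apply hab.subset
  intro m hm
  simp only [Set.mem_setOf_eq, proj] at hm ⊢
  intro hc2
  exact hm (by rw [hc2])

theorem measure_drop {h g : Site d → ℤ} (hfin : {m | h m ≠ g m}.Finite)
    {n : Site d} {v : ℤ} (hv : (v - h n).natAbs + 2 = (g n - h n).natAbs) :
    (∑ᶠ m, ((Function.update g n v) m - h m).natAbs) + 2 = ∑ᶠ m, (g m - h m).natAbs := by
  classical
  set S : Finset (Site d) := insert n hfin.toFinset with hS
  have hsub1 : Function.support (fun m => (g m - h m).natAbs) ⊆ (S : Set (Site d)) := by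
    intro m hm
    rw [Function.mem_support] at hm
    have : h m ≠ g m := by omega
    rw [hS]
    simp only [Finset.coe_insert, Set.mem_insert_iff, Set.Finite.coe_toFinset]
    exact Or.inr this
  have hsub2 : Function.support (fun m => ((Function.update g n v) m - h m).natAbs)
      ⊆ (S : Set (Site d)) := by
    intro m hm
    by_cases hmn : m = n
    · rw [hS, hmn]; simp
    · rw [Function.mem_support, Function.update_of_ne hmn] at hm
      have : h m ≠ g m := by omega
      rw [hS]
      simp only [Finset.coe_insert, Set.mem_insert_iff, Set.Finite.coe_toFinset]
      exact Or.inr this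
  rw [finsum_eq_sum_of_support_subset _ hsub1, finsum_eq_sum_of_support_subset _ hsub2]
  have hnS : n ∈ S := by rw [hS]; exact Finset.mem_insert_self n _
  have hA : ((Function.update g n v) n - h n).natAbs
      + ∑ m ∈ S.erase n, ((Function.update g n v) m - h m).natAbs
      = ∑ m ∈ S, ((Function.update g n v) m - h m).natAbs :=
    Finset.add_sum_erase S (fun m => ((Function.update g n v) m - h m).natAbs) hnS
  have hB : (g n - h n).natAbs + ∑ m ∈ S.erase n, (g m - h m).natAbs
      = ∑ m ∈ S, (g m - h m).natAbs :=
    Finset.add_sum_erase S (fun m => (g m - h m).natAbs) hnS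
  have hC : ∑ m ∈ S.erase n, ((Function.update g n v) m - h m).natAbs
      = ∑ m ∈ S.erase n, (g m - h m).natAbs := by
    apply Finset.sum_congr rfl
    intro m hm
    rw [Function.update_of_ne (Finset.mem_erase.mp hm).1]
  have hD : (Function.update g n v) n = v := Function.update_self _ _ _
  rw [hD] at hA
  omega

theorem key_base {M : ↥(DeltaOf (Xr d r)) → ℝ} (hM1 : IsCocycle (Xr d r) M) (j0 : Fin d)
    {h g : Site d → ℤ} {c : ZMod r} (heq : ∀ n, h n = g n)
    (hmem : (proj h c, proj g c) ∈ DeltaOf (Xr d r)) :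
    M ⟨(proj h c, proj g c), hmem⟩
      = gibbsDiff (fun _ _ => (0:ℝ)) (feI M j0) (proj h c) (proj g c) := by
  have hpg : proj g c = proj h c := funext fun n => by unfold proj; rw [heq n]
  have hmem' : (proj h c, proj h c) ∈ DeltaOf (Xr d r) := ⟨hmem.1, hmem.1, by simp⟩
  rw [M_congr M rfl hpg hmem hmem', M_self hM1, gibbs_congr M j0 rfl hpg, gibbs_self]

theorem key (hd : 2 ≤ d) (hr3 : 3 ≤ r) (hr4 : r ≠ 4)
    {M : ↥(DeltaOf (Xr d r)) → ℝ} (hM1 : IsCocycle (Xr d r) M) (hM2 : IsMarkovProp (Xr d r) M)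
    (j0 : Fin d) :
    ∀ (N : ℕ) (h g : Site d → ℤ) (c : ZMod r), IsHeightFn h → IsHeightFn g →
      ∀ hfin : {n | h n ≠ g n}.Finite,
      (∑ᶠ n, (g n - h n).natAbs) ≤ N →
      ∀ hmem : (proj h c, proj g c) ∈ DeltaOf (Xr d r),
        M ⟨(proj h c, proj g c), hmem⟩
          = gibbsDiff (fun _ _ => (0:ℝ)) (feI M j0) (proj h c) (proj g c) := by
  intro N
  induction N with
  | zero =>
      intro h g c hh hg hfin hμ hmem
      apply key_base hM1 j0 _ hmem
      intro n
      by_contra hc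
      have hsub : Function.support (fun m => (g m - h m).natAbs)
          ⊆ (hfin.toFinset : Set (Site d)) := by
        intro m hm
        rw [Function.mem_support] at hm
        rw [Set.Finite.coe_toFinset]
        simp only [Set.mem_setOf_eq]
        omega
      rw [finsum_eq_sum_of_support_subset _ hsub] at hμ
      have hn : n ∈ hfin.toFinset := by rw [Set.Finite.mem_toFinset]; exact hc
      have hle : (g n - h n).natAbs ≤ ∑ m ∈ hfin.toFinset, (g m - h m).natAbs :=
        Finset.single_le_sum (f := fun m => (g m - h m).natAbs) (fun _ _ => Nat.zero_le _) hn
      omega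
  | succ N ih =>
      intro h g c hh hg hfin hμ hmem
      by_cases hD : ∀ n, h n = g n
      · exact key_base hM1 j0 hD hmem
      · push_neg at hD
        obtain ⟨n₀, hn₀⟩ := hD
        have hpar := even_diff hd hh hg hfin
        rcases lt_or_gt_of_ne hn₀ with hA | hB
        · -- case A : h n₀ < g n₀, flip g down at a maximizer
          obtain ⟨n, hn_mem, hnmax⟩ := Finset.exists_max_image
            (hfin.toFinset.filter (fun m => h m < g m)) g
            ⟨n₀, Finset.mem_filter.mpr ⟨hfin.mem_toFinset.mpr (by exact fun hc => hn₀ hc), hA⟩⟩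
          have hn_lt : h n < g n := (Finset.mem_filter.mp hn_mem).2
          have hnb : ∀ m, adjacent n m → g m = g n - 1 := by
            intro m hadj
            rcases hf_pm hg hadj with h1 | h1
            · omega
            · exfalso
              have hge : g m ≤ h m ∨ (m ∈ hfin.toFinset.filter (fun m => h m < g m)) := by
                by_cases hDm : h m = g m
                · left; omega
                · by_cases hms : m ∈ hfin.toFinset.filter (fun m => h m < g m)
                  · right; exact hms
                  · left
                    have hmS : m ∈ hfin.toFinset := hfin.mem_toFinset.mpr hDm
                    have : ¬ (h m < g m) := fun hc =>
                      hms (Finset.mem_filter.mpr ⟨hmS, hc⟩)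
                    omega
              rcases hge with hge | hmem_s'
              · have := hf_pm hh hadj
                omega
              · have := hnmax m hmem_s'
                omega
          have hg' : IsHeightFn (Function.update g n (g n - 2)) := isHeight_update_down hg hnb
          have hDsub : {m | h m ≠ Function.update g n (g n - 2) m} ⊆ {m | h m ≠ g m} := by
            intro m hm
            simp only [Set.mem_setOf_eq] at hm ⊢
            by_cases hmn : m = n
            · subst hmn; omega
            · rw [Function.update_of_ne hmn] at hm; exact hm
          have hfin' : {m | h m ≠ Function.update g n (g n - 2) m}.Finite := hfin.subset hDsub
          have hfin_yy' : {m | g m ≠ Function.update g n (g n - 2) m}.Finite := by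
            apply (Set.finite_singleton n).subset
            intro m hm
            simp only [Set.mem_setOf_eq] at hm
            by_contra hc
            exact hm (by rw [Function.update_of_ne hc])
          have hmem_xy' : (proj h c, proj (Function.update g n (g n - 2)) c)
              ∈ DeltaOf (Xr d r) := ⟨proj_mem hh c, proj_mem hg' c, proj_fin hfin'⟩
          have hmem_yy' : (proj g c, proj (Function.update g n (g n - 2)) c)
              ∈ DeltaOf (Xr d r) := ⟨proj_mem hg c, proj_mem hg' c, proj_fin hfin_yy'⟩
          have hco := hM1 (proj h c) (proj g c) (proj (Function.update g n (g n - 2)) c)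
            hmem hmem_yy' hmem_xy'
          have hnbw : ∀ m, adjacent n m → proj g c m = proj g c n - 1 := by
            intro m hadj
            unfold proj
            rw [hnb m hadj]
            push_cast
            ring
          have hy'_eq : proj (Function.update g n (g n - 2)) c
              = Function.update (proj g c) n (proj g c n - 2) := by
            funext m
            by_cases hmn : m = n
            · subst hmn
              rw [Function.update_self]
              unfold proj
              rw [Function.update_self]
              push_cast
              ring
            · rw [Function.update_of_ne hmn]
              unfold proj
              rw [Function.update_of_ne hmn]
          have hmem_flip : (proj g c, Function.update (proj g c) n (proj g c n - 2))
              ∈ DeltaOf (Xr d r) := by rw [← hy'_eq]; exact hmem_yy'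
          have hMflip : M ⟨(proj g c, proj (Function.update g n (g n - 2)) c), hmem_yy'⟩
              = psi M n (proj g c n) := by
            rw [M_congr M rfl hy'_eq hmem_yy' hmem_flip]
            exact M_flip hM2 rfl hnbw hmem_flip
          have hGflip : gibbsDiff (fun _ _ => (0:ℝ)) (feI M j0) (proj g c)
              (proj (Function.update g n (g n - 2)) c) = psi M n (proj g c n) := by
            rw [gibbs_congr M j0 rfl hy'_eq]
            exact G_flip hr3 M j0 rfl hnbw
          have hv : ((g n - 2) - h n).natAbs + 2 = (g n - h n).natAbs := by
            have := hpar n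
            omega
          have hdrop := measure_drop hfin hv
          have hμ' : (∑ᶠ m, ((Function.update g n (g n - 2)) m - h m).natAbs) ≤ N := by omega
          have hind := ih h (Function.update g n (g n - 2)) c hh hg' hfin' hμ' hmem_xy'
          have hgadd := gibbs_add M j0 (proj_fin hfin)
            (proj_fin (d := d) (c := c) hfin_yy')
          linarith [hco, hind, hgadd, hMflip, hGflip]
        · -- case B : g n₀ < h n₀, flip g up at a minimizer
          obtain ⟨n, hn_mem, hnmin⟩ := Finset.exists_min_image
            (hfin.toFinset.filter (fun m => g m < h m)) g
            ⟨n₀, Finset.mem_filter.mpr ⟨hfin.mem_toFinset.mpr (by exact fun hc => hn₀ hc), hB⟩⟩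
          have hn_lt : g n < h n := (Finset.mem_filter.mp hn_mem).2
          have hnb : ∀ m, adjacent n m → g m = g n + 1 := by
            intro m hadj
            rcases hf_pm hg hadj with h1 | h1
            · exfalso
              have hge : h m ≤ g m ∨ (m ∈ hfin.toFinset.filter (fun m => g m < h m)) := by
                by_cases hDm : h m = g m
                · left; omega
                · by_cases hms : m ∈ hfin.toFinset.filter (fun m => g m < h m)
                  · right; exact hms
                  · left
                    have hmS : m ∈ hfin.toFinset := hfin.mem_toFinset.mpr hDm
                    have : ¬ (g m < h m) := fun hc =>
                      hms (Finset.mem_filter.mpr ⟨hmS, hc⟩)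
                    omega
              rcases hge with hge | hmem_s'
              · have := hf_pm hh hadj
                omega
              · have := hnmin m hmem_s'
                omega
            · omega
          have hg' : IsHeightFn (Function.update g n (g n + 2)) := isHeight_update_up hg hnb
          have hDsub : {m | h m ≠ Function.update g n (g n + 2) m} ⊆ {m | h m ≠ g m} := by
            intro m hm
            simp only [Set.mem_setOf_eq] at hm ⊢
            by_cases hmn : m = n
            · subst hmn; omega
            · rw [Function.update_of_ne hmn] at hm; exact hm
          have hfin' : {m | h m ≠ Function.update g n (g n + 2) m}.Finite := hfin.subset hDsub
          have hfin_y'y : {m | Function.update g n (g n + 2) m ≠ g m}.Finite := by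
            apply (Set.finite_singleton n).subset
            intro m hm
            simp only [Set.mem_setOf_eq] at hm
            by_contra hc
            exact hm (by rw [Function.update_of_ne hc])
          have hmem_xy' : (proj h c, proj (Function.update g n (g n + 2)) c)
              ∈ DeltaOf (Xr d r) := ⟨proj_mem hh c, proj_mem hg' c, proj_fin hfin'⟩
          have hmem_y'y : (proj (Function.update g n (g n + 2)) c, proj g c)
              ∈ DeltaOf (Xr d r) := ⟨proj_mem hg' c, proj_mem hg c, proj_fin hfin_y'y⟩
          have hco := hM1 (proj h c) (proj (Function.update g n (g n + 2)) c) (proj g c)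
            hmem_xy' hmem_y'y hmem
          -- (y', y) is a downward flip of y' at n with value cv' = proj g' c n
          have hnbw : ∀ m, adjacent n m → proj (Function.update g n (g n + 2)) c m
              = proj (Function.update g n (g n + 2)) c n - 1 := by
            intro m hadj
            have hmn : m ≠ n := by
              intro hc2; subst hc2; exact adj_irrefl m hadj
            unfold proj
            rw [Function.update_of_ne hmn, Function.update_self, hnb m hadj]
            push_cast
            ring
          have hy_eq : proj g c = Function.update (proj (Function.update g n (g n + 2)) c) n
              (proj (Function.update g n (g n + 2)) c n - 2) := by
            funext m
            by_cases hmn : m = n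
            · subst hmn
              rw [Function.update_self]
              unfold proj
              rw [Function.update_self]
              push_cast
              ring
            · rw [Function.update_of_ne hmn]
              unfold proj
              rw [Function.update_of_ne hmn]
          have hmem_flip : (proj (Function.update g n (g n + 2)) c,
              Function.update (proj (Function.update g n (g n + 2)) c) n
                (proj (Function.update g n (g n + 2)) c n - 2)) ∈ DeltaOf (Xr d r) := by
            rw [← hy_eq]; exact hmem_y'y
          have hMflip : M ⟨(proj (Function.update g n (g n + 2)) c, proj g c), hmem_y'y⟩
              = psi M n (proj (Function.update g n (g n + 2)) c n) := by
            rw [M_congr M rfl hy_eq hmem_y'y hmem_flip]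
            exact M_flip hM2 rfl hnbw hmem_flip
          have hGflip : gibbsDiff (fun _ _ => (0:ℝ)) (feI M j0)
              (proj (Function.update g n (g n + 2)) c) (proj g c)
              = psi M n (proj (Function.update g n (g n + 2)) c n) := by
            rw [gibbs_congr M j0 rfl hy_eq]
            exact G_flip hr3 M j0 rfl hnbw
          have hv : ((g n + 2) - h n).natAbs + 2 = (g n - h n).natAbs := by
            have := hpar n
            omega
          have hdrop := measure_drop hfin hv
          have hμ' : (∑ᶠ m, ((Function.update g n (g n + 2)) m - h m).natAbs) ≤ N := by omega
          have hind := ih h (Function.update g n (g n + 2)) c hh hg' hfin' hμ' hmem_xy'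
          have hgadd := gibbs_add M j0 (proj_fin hfin') (proj_fin (d := d) (c := c) hfin_y'y)
          linarith [hco, hind, hgadd, hMflip, hGflip]

end MCXr

open MCXr

/-- For `d ≥ 2`, `r ∉ {1,2,4}`: every Markov cocycle on `X_r`
(not assumed shift-invariant) is the Gibbs cocycle of some nearest neighbor interaction
(not necessarily shift-invariant): `M_{X_r} = G_{X_r}`. -/
theorem markov_cocycles_Xr_are_gibbs
    (d r : ℕ) (hd : 2 ≤ d) (hr0 : 0 < r) (hr1 : r ≠ 1) (hr2 : r ≠ 2) (hr4 : r ≠ 4)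
    (M : ↥(DeltaOf (Xr d r)) → ℝ)
    (hM : IsCocycle (Xr d r) M ∧ IsMarkovProp (Xr d r) M) :
    ∃ (fv : Site d → ZMod r → ℝ) (fe : Site d → Fin d → ZMod r → ZMod r → ℝ),
      ∀ p : ↥(DeltaOf (Xr d r)), M p = gibbsDiff fv fe p.val.1 p.val.2 := by
  obtain ⟨hM1, hM2⟩ := hM
  have hr3 : 3 ≤ r := by omega
  have hdpos : 0 < d := by omega
  refine ⟨fun _ _ => (0:ℝ), feI M ⟨0, hdpos⟩, ?_⟩
  set j0 : Fin d := ⟨0, hdpos⟩ with hj0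
  rintro ⟨⟨x, y⟩, hmem⟩
  have hx : x ∈ Xr d r := hmem.1
  have hy : y ∈ Xr d r := hmem.2.1
  have hfin : {n | x n ≠ y n}.Finite := hmem.2.2
  have hhx : IsHeightFn (heightOf x) := heightOf_isHeight hr3 hr4 hx
  have hhy : IsHeightFn (heightOf y) := heightOf_isHeight hr3 hr4 hy
  obtain ⟨R, hR0, hRb⟩ := exists_bound hfin
  -- the difference of the two canonical lifts is constant far away
  have hδconst : ∀ n m : Site d, (∃ i, R < |n i|) → (∃ i, R < |m i|) →
      (heightOf y n - heightOf x n) = (heightOf y m - heightOf x m) := by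
    apply const_on_U hd R hR0
    intro n k σ hσ hU hU'
    have hadj : adjacent (n + Pi.single k σ) n := adj_single n k hσ
    have hgx := heightOf_grad hr3 hr4 hx hadj
    have hgy := heightOf_grad hr3 hr4 hy hadj
    have hxn : x n = y n := by
      by_contra hc
      obtain ⟨i, hi⟩ := hU
      exact absurd (hRb n hc i) (not_le.mpr hi)
    have hxn' : x (n + Pi.single k σ) = y (n + Pi.single k σ) := by
      by_contra hc
      obtain ⟨i, hi⟩ := hU'
      exact absurd (hRb _ hc i) (not_le.mpr hi)
    have heps : eps x (n + Pi.single k σ) n = eps y (n + Pi.single k σ) n :=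
      eps_congr hxn' hxn
    have : heightOf y (n + Pi.single k σ) - heightOf y n
        = heightOf x (n + Pi.single k σ) - heightOf x n := by rw [hgx, hgy, heps]
    linarith
  set cpt : Site d := fun _ => R + 1 with hcpt
  have hcptU : ∃ i, R < |cpt i| := ⟨j0, by show R < |R + 1|; rw [abs_of_pos (by omega)]; omega⟩
  set cδ : ℤ := heightOf y cpt - heightOf x cpt with hcδ
  set g : Site d → ℤ := fun n => heightOf y n - cδ with hgdef
  have hgheight : IsHeightFn g := by
    intro n m hadj
    have e : g n - g m = heightOf y n - heightOf y m := by rw [hgdef]; ring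
    rw [e]
    exact hhy n m hadj
  have hfinhg : {n | heightOf x n ≠ g n}.Finite := by
    apply (finite_box R).subset
    intro n hn
    simp only [Set.mem_setOf_eq] at hn ⊢
    by_contra hc
    push_neg at hc
    obtain ⟨i, hi⟩ := hc
    apply hn
    have hcc := hδconst n cpt ⟨i, hi⟩ hcptU
    show heightOf x n = heightOf y n - cδ
    rw [hcδ]
    omega
  -- projections
  have hcastgrad : ∀ (z : Site d → ZMod r), z ∈ Xr d r →
      ∀ (n : Site d) (k : Fin d),
        (fun n => z n - ((heightOf z n : ℤ) : ZMod r)) (n + Pi.single k 1)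
          = (fun n => z n - ((heightOf z n : ℤ) : ZMod r)) n := by
    intro z hz n k
    have hadj : adjacent (n + Pi.single k 1) n := adj_single n k (Or.inl rfl)
    have hgr := heightOf_grad hr3 hr4 hz hadj
    have hcast := eps_cast hr3 hz hadj
    simp only
    have hthis : ((heightOf z (n + Pi.single k 1) - heightOf z n : ℤ) : ZMod r)
        = z (n + Pi.single k 1) - z n := by rw [hgr, hcast]
    push_cast at hthis
    linear_combination -hthis
  have h0x : ((heightOf x 0 : ℤ) : ZMod r) = 0 := by rw [heightOf_zero]; norm_num
  have hxproj : x = proj (heightOf x) (x 0) := by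
    have hconst := const_of_step
      (fun n : Site d => x n - ((heightOf x n : ℤ) : ZMod r)) (hcastgrad x hx)
    funext n
    have hcn := hconst n
    unfold proj
    linear_combination hcn - h0x
  have hgrad_g : ∀ (n : Site d) (k : Fin d),
      (fun n => y n - ((g n : ℤ) : ZMod r)) (n + Pi.single k 1)
        = (fun n => y n - ((g n : ℤ) : ZMod r)) n := by
    intro n k
    have hadj : adjacent (n + Pi.single k 1) n := adj_single n k (Or.inl rfl)
    have hgr := heightOf_grad hr3 hr4 hy hadj
    have hcast := eps_cast hr3 hy hadj
    simp only
    have hthis : ((heightOf y (n + Pi.single k 1) - heightOf y n : ℤ) : ZMod r)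
        = y (n + Pi.single k 1) - y n := by rw [hgr, hcast]
    have hgg : (g (n + Pi.single k 1) : ℤ) - g n
        = heightOf y (n + Pi.single k 1) - heightOf y n := by rw [hgdef]; ring
    have hthis2 : ((g (n + Pi.single k 1) - g n : ℤ) : ZMod r)
        = y (n + Pi.single k 1) - y n := by rw [hgg, hthis]
    push_cast at hthis2
    linear_combination -hthis2
  have hyproj : y = proj g (y 0 - ((g 0 : ℤ) : ZMod r)) := by
    have hconst := const_of_step
      (fun n : Site d => y n - ((g n : ℤ) : ZMod r)) hgrad_g
    funext n
    have hcn := hconst n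
    unfold proj
    linear_combination hcn
  -- constants agree
  obtain ⟨q, hq⟩ := exists_notMem hd (hfin.union hfinhg)
  have hq1 : x q = y q := by
    by_contra hc
    exact hq (Or.inl hc)
  have hq2 : heightOf x q = g q := by
    by_contra hc
    exact hq (Or.inr hc)
  have hc1x : y 0 - ((g 0 : ℤ) : ZMod r) = x 0 := by
    have e1 := congrFun hxproj q
    have e2 := congrFun hyproj q
    unfold proj at e1 e2
    rw [← hq2] at e2
    rw [hq1] at e1
    linear_combination e1 - e2
  have hyproj' : y = proj g (x 0) := by rw [← hc1x]; exact hyproj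
  -- apply the key induction
  have hmem' : (proj (heightOf x) (x 0), proj g (x 0)) ∈ DeltaOf (Xr d r) :=
    ⟨proj_mem hhx _, proj_mem hgheight _, proj_fin hfinhg⟩
  have hkey := key hd hr3 hr4 hM1 hM2 j0 (∑ᶠ n, (g n - heightOf x n).natAbs)
    (heightOf x) g (x 0) hhx hgheight hfinhg le_rfl hmem'
  calc M ⟨(x, y), hmem⟩
      = M ⟨(proj (heightOf x) (x 0), proj g (x 0)), hmem'⟩ :=
        M_congr M hxproj hyproj' hmem hmem'
    _ = gibbsDiff (fun _ _ => (0:ℝ)) (feI M j0) (proj (heightOf x) (x 0)) (proj g (x 0)) := hkey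
    _ = gibbsDiff (fun _ _ => (0:ℝ)) (feI M j0) x y :=
        (gibbs_congr M j0 hxproj hyproj').symm
end

section
/- Fix d ≥ 2 and an integer r with r ∉ {1,2,4}. There exists a shift-invariant Markov cocycle on X_r which is the Gibbs cocycle of some nearest neighbor interaction but is not the Gibbs cocycle of any shift-invariant nearest neighbor interaction; that is, G^σ_{X_r} ≠ G_{X_r} ∩ M^σ_{X_r}. -/
open scoped BigOperators

namespace CMproof

open Function Set

variable {d r : ℕ}

/-- local slope of an edge -/
def sZ (r : ℕ) (a b : ZMod r) : ℤ := if b - a = 1 then 1 else -1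

lemma sZ_pm (a b : ZMod r) : sZ r a b = 1 ∨ sZ r a b = -1 := by
  unfold sZ; split
  · exact Or.inl rfl
  · exact Or.inr rfl

lemma neg_one_ne_one (hr3 : 3 ≤ r) : (-1 : ZMod r) ≠ 1 := by
  haveI : NeZero r := ⟨by omega⟩
  intro h
  have h2 : ((2 : ℕ) : ZMod r) = 0 := by
    push_cast
    linear_combination -h
  rw [ZMod.natCast_eq_zero_iff] at h2
  have := Nat.le_of_dvd (by norm_num) h2
  omega

lemma sZ_cast' (hr3 : 3 ≤ r) {a b : ZMod r} (h : b - a = 1 ∨ b - a = -1) :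
    ((sZ r a b : ℤ) : ZMod r) = b - a := by
  unfold sZ
  rcases h with h | h
  · rw [if_pos h, h]; push_cast; ring
  · have hne : ¬ (b - a = 1) := by rw [h]; exact neg_one_ne_one hr3
    rw [if_neg hne, h]; push_cast; ring

lemma unitVec_same (j : Fin d) : unitVec (d := d) j j = 1 := Pi.single_eq_same j 1

lemma unitVec_other {i j : Fin d} (h : i ≠ j) : unitVec (d := d) j i = 0 :=
  Pi.single_eq_of_ne h 1

lemma unitVec_ne_zero (j : Fin d) : unitVec (d := d) j ≠ 0 := by
  intro h
  have := congrFun h j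
  rw [unitVec_same] at this
  exact one_ne_zero this

lemma unitVec_inj {j k : Fin d} (h : unitVec (d := d) j = unitVec k) : j = k := by
  by_contra hc
  have := congrFun h j
  rw [unitVec_same, unitVec_other (Ne.symm ?_)] at this
  · exact one_ne_zero this
  · exact fun hh => hc hh.symm

lemma sum_abs_unitVec (j : Fin d) : (∑ i, |unitVec (d := d) j i|) = 1 := by
  rw [Finset.sum_eq_single j]
  · rw [unitVec_same]; rfl
  · intro i _ hij; rw [unitVec_other hij]; rfl
  · intro h; exact absurd (Finset.mem_univ j) h

lemma sum_unitVec (j : Fin d) : (∑ i, unitVec (d := d) j i) = 1 := by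
  rw [Finset.sum_eq_single j]
  · exact unitVec_same j
  · intro i _ hij; exact unitVec_other hij
  · intro h; exact absurd (Finset.mem_univ j) h

lemma adjacent_add_unitVec (n : Site d) (j : Fin d) : adjacent n (n + unitVec j) := by
  unfold adjacent
  have h : ∀ i, |n i - (n + unitVec j) i| = |unitVec (d := d) j i| := by
    intro i
    have : n i - (n + unitVec j) i = -(unitVec (d := d) j i) := by
      simp [Pi.add_apply]
    rw [this, abs_neg]
  simp only [h]
  exact sum_abs_unitVec j

lemma adjacent_add_unitVec' (n : Site d) (j : Fin d) : adjacent (n + unitVec j) n := by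
  unfold adjacent
  have h : ∀ i, |(n + unitVec j) i - n i| = |unitVec (d := d) j i| := by
    intro i
    have : (n + unitVec j) i - n i = unitVec (d := d) j i := by simp [Pi.add_apply]
    rw [this]
  simp only [h]
  exact sum_abs_unitVec j

lemma step {x : Site d → ZMod r} (hx : x ∈ Xr d r) (n : Site d) (j : Fin d) :
    x (n + unitVec j) - x n = 1 ∨ x (n + unitVec j) - x n = -1 :=
  hx _ _ (adjacent_add_unitVec' n j)

lemma sZ_cast {x : Site d → ZMod r} (hr3 : 3 ≤ r) (hx : x ∈ Xr d r) (n : Site d) (j : Fin d) :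
    ((sZ r (x n) (x (n + unitVec j)) : ℤ) : ZMod r) = x (n + unitVec j) - x n :=
  sZ_cast' hr3 (step hx n j)

lemma small_eq_zero (hr3 : 3 ≤ r) (hr4 : r ≠ 4) {A : ℤ} (hdvd : ((r : ℕ) : ℤ) ∣ A)
    (h1 : -4 ≤ A) (h2 : A ≤ 4) (h3 : 2 ∣ A) : A = 0 := by
  by_contra hA
  have habs : (r : ℤ) ∣ |A| := (dvd_abs _ _).mpr hdvd
  have hle : (r : ℤ) ≤ |A| := Int.le_of_dvd (abs_pos.mpr hA) habs
  have h4 : |A| ≤ 4 := abs_le.mpr ⟨h1, h2⟩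
  have hrle : (r : ℤ) ≤ 4 := le_trans hle h4
  have hrle' : r ≤ 4 := by exact_mod_cast hrle
  have hr3' : r = 3 := by omega
  subst hr3'
  have h3d : (3 : ℤ) ∣ A := by exact_mod_cast hdvd
  omega

lemma plaq {x : Site d → ZMod r} (hr3 : 3 ≤ r) (hr4 : r ≠ 4) (hx : x ∈ Xr d r)
    (n : Site d) (j k : Fin d) :
    sZ r (x n) (x (n + unitVec j)) + sZ r (x (n + unitVec j)) (x (n + unitVec j + unitVec k))
      = sZ r (x n) (x (n + unitVec k))
        + sZ r (x (n + unitVec k)) (x (n + unitVec k + unitVec j)) := by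
  haveI : NeZero r := ⟨by omega⟩
  have key : sZ r (x n) (x (n + unitVec j))
      + sZ r (x (n + unitVec j)) (x (n + unitVec j + unitVec k))
      - (sZ r (x n) (x (n + unitVec k))
      + sZ r (x (n + unitVec k)) (x (n + unitVec k + unitVec j))) = 0 := by
    apply small_eq_zero hr3 hr4
    · rw [← ZMod.intCast_zmod_eq_zero_iff_dvd]
      push_cast
      rw [sZ_cast hr3 hx n j, sZ_cast hr3 hx (n + unitVec j) k,
          sZ_cast hr3 hx n k, sZ_cast hr3 hx (n + unitVec k) j]
      rw [add_right_comm n (unitVec k) (unitVec j)]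
      ring
    · rcases sZ_pm (x n) (x (n + unitVec j)) with h1 | h1 <;>
      rcases sZ_pm (x (n + unitVec j)) (x (n + unitVec j + unitVec k)) with h2 | h2 <;>
      rcases sZ_pm (x n) (x (n + unitVec k)) with h3 | h3 <;>
      rcases sZ_pm (x (n + unitVec k)) (x (n + unitVec k + unitVec j)) with h4 | h4 <;>
      omega
    · rcases sZ_pm (x n) (x (n + unitVec j)) with h1 | h1 <;>
      rcases sZ_pm (x (n + unitVec j)) (x (n + unitVec j + unitVec k)) with h2 | h2 <;>
      rcases sZ_pm (x n) (x (n + unitVec k)) with h3 | h3 <;>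
      rcases sZ_pm (x (n + unitVec k)) (x (n + unitVec k + unitVec j)) with h4 | h4 <;>
      omega
    · rcases sZ_pm (x n) (x (n + unitVec j)) with h1 | h1 <;>
      rcases sZ_pm (x (n + unitVec j)) (x (n + unitVec j + unitVec k)) with h2 | h2 <;>
      rcases sZ_pm (x n) (x (n + unitVec k)) with h3 | h3 <;>
      rcases sZ_pm (x (n + unitVec k)) (x (n + unitVec k + unitVec j)) with h4 | h4 <;>
      omega
  omega

/-- real-valued local slope difference of the pair `(x, y)` across edge `(n, n+e_j)` -/
noncomputable def dT (r : ℕ) (j : Fin d) (x y : Site d → ZMod r) (n : Site d) : ℝ :=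
  ((sZ r (y n) (y (n + unitVec j)) : ℤ) : ℝ) - ((sZ r (x n) (x (n + unitVec j)) : ℤ) : ℝ)

/-- edge term of the Gibbs cocycle -/
noncomputable def eT (r : ℕ) (j0 : Fin d) (x y : Site d → ZMod r) (n : Site d) : ℝ :=
  -((n j0 : ℤ) : ℝ) * dT r j0 x y n

/-- vertex term of the Gibbs cocycle -/
noncomputable def vT (r : ℕ) (x y : Site d → ZMod r) (n : Site d) : ℝ :=
  (((-(y n)).val : ℕ) : ℝ) - (((-(x n)).val : ℕ) : ℝ)

/-- the (non shift-invariant) edge interaction -/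
noncomputable def feD (d r : ℕ) (j0 : Fin d) : Site d → Fin d → ZMod r → ZMod r → ℝ :=
  fun n j a b => if j = j0 then -((n j0 : ℤ) : ℝ) * ((sZ r a b : ℤ) : ℝ) else 0

/-- the vertex interaction -/
noncomputable def fvD (d r : ℕ) : Site d → ZMod r → ℝ :=
  fun _ a => (((-a).val : ℕ) : ℝ)

lemma gibbs_eq (j0 : Fin d) (x y : Site d → ZMod r) :
    gibbsDiff (fvD d r) (feD d r j0) x y
      = (∑ᶠ n, vT r x y n) + ∑ᶠ n, eT r j0 x y n := by
  unfold gibbsDiff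
  congr 1
  apply finsum_congr; intro n
  rw [Finset.sum_eq_single j0]
  · simp only [feD, if_true, eq_self_iff_true]; unfold eT dT; ring
  · intro j _ hj; simp [feD, hj]
  · intro h; exact absurd (Finset.mem_univ _) h

lemma vT_supp (x y : Site d → ZMod r) :
    Function.support (vT r x y) ⊆ {n | x n ≠ y n} := by
  intro n hn
  simp only [Set.mem_setOf_eq]
  intro h
  apply hn
  unfold vT; rw [h]; ring

lemma dT_supp (j : Fin d) (x y : Site d → ZMod r) :
    Function.support (dT r j x y)
      ⊆ {n | x n ≠ y n} ∪ (fun m => m + unitVec j) ⁻¹' {n | x n ≠ y n} := by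
  intro n hn
  by_contra hc
  simp only [Set.mem_union, Set.mem_preimage, Set.mem_setOf_eq, not_or, not_not] at hc
  obtain ⟨h1, h2⟩ := hc
  apply hn
  unfold dT; rw [h1, h2]; ring

lemma eT_supp (j0 : Fin d) (x y : Site d → ZMod r) :
    Function.support (eT r j0 x y) ⊆ Function.support (dT r j0 x y) := by
  intro n hn
  simp only [Function.mem_support]
  intro h
  apply hn
  unfold eT; rw [h]; ring

lemma Dbig_finite {x y : Site d → ZMod r} (h : {n | x n ≠ y n}.Finite) (j : Fin d) :
    ({n | x n ≠ y n} ∪ (fun m => m + unitVec j) ⁻¹' {n | x n ≠ y n}).Finite :=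
  h.union (h.preimage (add_left_injective _).injOn)

lemma dT_supp_fin {x y : Site d → ZMod r} (h : {n | x n ≠ y n}.Finite) (j : Fin d) :
    (Function.support (dT r j x y)).Finite :=
  (Dbig_finite h j).subset (dT_supp j x y)

lemma eT_supp_fin {x y : Site d → ZMod r} (h : {n | x n ≠ y n}.Finite) (j0 : Fin d) :
    (Function.support (eT r j0 x y)).Finite :=
  (dT_supp_fin h j0).subset (eT_supp j0 x y)

lemma vT_supp_fin {x y : Site d → ZMod r} (h : {n | x n ≠ y n}.Finite) :
    (Function.support (vT r x y)).Finite :=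
  h.subset (vT_supp x y)

lemma dT_plaq (hr3 : 3 ≤ r) (hr4 : r ≠ 4) {x y : Site d → ZMod r}
    (hx : x ∈ Xr d r) (hy : y ∈ Xr d r) (j0 j1 : Fin d) (n : Site d) :
    dT r j0 x y (n + unitVec j1) - dT r j0 x y n
      = dT r j1 x y (n + unitVec j0) - dT r j1 x y n := by
  have Hx := plaq hr3 hr4 hx n j0 j1
  have Hy := plaq hr3 hr4 hy n j0 j1
  have Hx' : ((sZ r (x n) (x (n + unitVec j0)) : ℤ) : ℝ)
      + ((sZ r (x (n + unitVec j0)) (x (n + unitVec j0 + unitVec j1)) : ℤ) : ℝ)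
      = ((sZ r (x n) (x (n + unitVec j1)) : ℤ) : ℝ)
      + ((sZ r (x (n + unitVec j1)) (x (n + unitVec j1 + unitVec j0)) : ℤ) : ℝ) := by
    exact_mod_cast congrArg (fun t : ℤ => (t : ℝ)) Hx
  have Hy' : ((sZ r (y n) (y (n + unitVec j0)) : ℤ) : ℝ)
      + ((sZ r (y (n + unitVec j0)) (y (n + unitVec j0 + unitVec j1)) : ℤ) : ℝ)
      = ((sZ r (y n) (y (n + unitVec j1)) : ℤ) : ℝ)
      + ((sZ r (y (n + unitVec j1)) (y (n + unitVec j1 + unitVec j0)) : ℤ) : ℝ) := by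
    exact_mod_cast congrArg (fun t : ℤ => (t : ℝ)) Hy
  unfold dT
  linarith [Hx', Hy']

lemma finsum_shift (g : ℤ → ℝ) : (∑ᶠ k : ℤ, g (k + 1)) = ∑ᶠ k : ℤ, g k :=
  finsum_comp_equiv (Equiv.addRight (1 : ℤ))

lemma telescope {g : ℤ → ℝ} (h : (Function.support g).Finite) :
    ∑ᶠ k : ℤ, (g (k + 1) - g k) = 0 := by
  have h1 : (Function.support fun k : ℤ => g (k + 1)).Finite := by
    have hsub : (Function.support fun k : ℤ => g (k + 1))
        ⊆ (fun k : ℤ => k + 1) ⁻¹' (Function.support g) := fun k hk => hk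
    exact (h.preimage (add_left_injective _).injOn).subset hsub
  rw [finsum_sub_distrib h1 h, finsum_shift]
  ring

end CMproof
namespace CMproof

variable {d r : ℕ}

lemma line_inj (n : Site d) (j : Fin d) :
    Function.Injective fun k : ℤ => n + k • unitVec (d := d) j := by
  intro k1 k2 h
  have h2 : n + k1 • unitVec (d := d) j = n + k2 • unitVec (d := d) j := h
  have h' := congrFun h2 j
  simp only [Pi.add_apply, Pi.smul_apply, unitVec_same, smul_eq_mul, mul_one] at h'
  omega

lemma line_supp_fin {x y : Site d → ZMod r} (hfin : {n | x n ≠ y n}.Finite)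
    (j0 : Fin d) (n : Site d) :
    (Function.support fun k : ℤ => dT r j0 x y (n + k • unitVec j0)).Finite := by
  have hsub : (Function.support fun k : ℤ => dT r j0 x y (n + k • unitVec j0))
      ⊆ (fun k : ℤ => n + k • unitVec (d := d) j0) ⁻¹'
        ({m | x m ≠ y m} ∪ (fun m => m + unitVec j0) ⁻¹' {m | x m ≠ y m}) := by
    intro k hk
    exact dT_supp j0 x y hk
  exact ((Dbig_finite hfin j0).preimage (line_inj n j0).injOn).subset hsub

/-- sum of `dT` along the line through `n` in direction `j0` -/
noncomputable def lineSum (r : ℕ) (j0 : Fin d) (x y : Site d → ZMod r) (n : Site d) : ℝ :=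
  ∑ᶠ k : ℤ, dT r j0 x y (n + k • unitVec j0)

lemma lineSum_step (hr3 : 3 ≤ r) (hr4 : r ≠ 4) {x y : Site d → ZMod r}
    (hx : x ∈ Xr d r) (hy : y ∈ Xr d r) (hfin : {n | x n ≠ y n}.Finite)
    (j0 j1 : Fin d) (n : Site d) :
    lineSum r j0 x y (n + unitVec j1) = lineSum r j0 x y n := by
  have hf1 : (Function.support fun k : ℤ => dT r j0 x y (n + k • unitVec j0 + unitVec j1)).Finite := by
    have he : (fun k : ℤ => dT r j0 x y (n + k • unitVec j0 + unitVec j1))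
        = fun k : ℤ => dT r j0 x y ((n + unitVec j1) + k • unitVec j0) := by
      funext k; rw [add_right_comm]
    rw [he]
    exact line_supp_fin hfin j0 (n + unitVec j1)
  have hf2 := line_supp_fin hfin j0 n
  have hsub : lineSum r j0 x y (n + unitVec j1) - lineSum r j0 x y n
      = ∑ᶠ k : ℤ, (dT r j0 x y (n + k • unitVec j0 + unitVec j1)
          - dT r j0 x y (n + k • unitVec j0)) := by
    rw [finsum_sub_distrib hf1 hf2]
    congr 1
    apply finsum_congr; intro k
    rw [add_right_comm]
  have hplq : ∀ k : ℤ, dT r j0 x y (n + k • unitVec j0 + unitVec j1)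
      - dT r j0 x y (n + k • unitVec j0)
      = dT r j1 x y (n + (k + 1) • unitVec j0) - dT r j1 x y (n + k • unitVec j0) := by
    intro k
    have h := dT_plaq hr3 hr4 hx hy j0 j1 (n + k • unitVec j0)
    have e2 : n + (k + 1) • unitVec (d := d) j0 = n + k • unitVec j0 + unitVec j0 := by
      rw [add_smul, one_smul, ← add_assoc]
    rw [e2]
    exact h
  have htel : ∑ᶠ k : ℤ, (dT r j1 x y (n + (k + 1) • unitVec j0)
      - dT r j1 x y (n + k • unitVec j0)) = 0 := by
    have hsupg : (Function.support fun k : ℤ => dT r j1 x y (n + k • unitVec j0)).Finite := by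
      have hsub2 : (Function.support fun k : ℤ => dT r j1 x y (n + k • unitVec j0))
          ⊆ (fun k : ℤ => n + k • unitVec (d := d) j0) ⁻¹'
            ({m | x m ≠ y m} ∪ (fun m => m + unitVec j1) ⁻¹' {m | x m ≠ y m}) := by
        intro k hk
        exact dT_supp j1 x y hk
      exact ((Dbig_finite hfin j1).preimage (line_inj n j0).injOn).subset hsub2
    exact telescope hsupg
  have : lineSum r j0 x y (n + unitVec j1) - lineSum r j0 x y n = 0 := by
    rw [hsub, finsum_congr hplq, htel]
  linarith

lemma lineSum_iter (hr3 : 3 ≤ r) (hr4 : r ≠ 4) {x y : Site d → ZMod r}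
    (hx : x ∈ Xr d r) (hy : y ∈ Xr d r) (hfin : {n | x n ≠ y n}.Finite)
    (j0 j1 : Fin d) (c : ℕ) (n : Site d) :
    lineSum r j0 x y (n + (c : ℤ) • unitVec j1) = lineSum r j0 x y n := by
  induction c generalizing n with
  | zero => simp
  | succ m ih =>
    have e : n + ((m + 1 : ℕ) : ℤ) • unitVec (d := d) j1
        = (n + (m : ℤ) • unitVec j1) + unitVec j1 := by
      push_cast
      rw [add_smul, one_smul, ← add_assoc]
    rw [e, lineSum_step hr3 hr4 hx hy hfin j0 j1, ih]

lemma lineSum_zero (hr3 : 3 ≤ r) (hr4 : r ≠ 4) {x y : Site d → ZMod r}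
    (hx : x ∈ Xr d r) (hy : y ∈ Xr d r) (hfin : {n | x n ≠ y n}.Finite)
    (j0 j1 : Fin d) (hne : j0 ≠ j1) (n : Site d) :
    lineSum r j0 x y n = 0 := by
  classical
  set Db := {m | x m ≠ y m} ∪ (fun m => m + unitVec j0) ⁻¹' {m | x m ≠ y m} with hDbdef
  have hDb : Db.Finite := Dbig_finite hfin j0
  have himg : ((fun m : Site d => m j1) '' Db).Finite := hDb.image _
  obtain ⟨B, hB⟩ := himg.bddAbove
  set c : ℕ := (B - n j1 + 1).toNat with hc
  have hcge : B - n j1 + 1 ≤ (c : ℤ) := Int.self_le_toNat _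
  have hzero : ∀ k : ℤ, dT r j0 x y ((n + (c : ℤ) • unitVec j1) + k • unitVec j0) = 0 := by
    intro k
    by_contra hne0
    have hmem : ((n + (c : ℤ) • unitVec j1) + k • unitVec j0) ∈ Db :=
      dT_supp j0 x y hne0
    have hcoord : ((n + (c : ℤ) • unitVec j1) + k • unitVec j0) j1 = n j1 + c := by
      simp only [Pi.add_apply, Pi.smul_apply, unitVec_same, unitVec_other hne.symm,
        smul_eq_mul, mul_one, mul_zero, add_zero]
    have : ((n + (c : ℤ) • unitVec j1) + k • unitVec j0) j1 ∈ (fun m : Site d => m j1) '' Db :=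
      Set.mem_image_of_mem _ hmem
    have hle := hB this
    rw [hcoord] at hle
    omega
  have h0 : lineSum r j0 x y (n + (c : ℤ) • unitVec j1) = 0 := by
    unfold lineSum
    rw [finsum_congr hzero]
    exact finsum_zero
  rw [← lineSum_iter hr3 hr4 hx hy hfin j0 j1 c n, h0]

lemma total_zero (hr3 : 3 ≤ r) (hr4 : r ≠ 4) {x y : Site d → ZMod r}
    (hx : x ∈ Xr d r) (hy : y ∈ Xr d r) (hfin : {n | x n ≠ y n}.Finite)
    (j0 j1 : Fin d) (hne : j0 ≠ j1) :
    ∑ᶠ n : Site d, dT r j0 x y n = 0 := by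
  classical
  set Db := {m | x m ≠ y m} ∪ (fun m => m + unitVec j0) ⁻¹' {m | x m ≠ y m} with hDbdef
  have hDb : Db.Finite := Dbig_finite hfin j0
  set T : Finset (Site d) := hDb.toFinset with hT
  set base : Site d → Site d := fun m => m + (-(m j0)) • unitVec j0 with hbase
  set Q : Finset (Site d) := T.image base with hQ
  set I : Finset ℤ := T.image (fun m => m j0) with hI
  have hbase0 : ∀ m, base m j0 = 0 := by
    intro m
    simp only [hbase, Pi.add_apply, Pi.smul_apply, unitVec_same, smul_eq_mul, mul_one]
    ring
  have hrecon : ∀ m : Site d, base m + (m j0) • unitVec j0 = m := by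
    intro m
    simp only [hbase]
    rw [add_assoc, ← add_smul]
    simp
  have hQ0 : ∀ b ∈ Q, b j0 = 0 := by
    intro b hb
    rw [hQ] at hb
    obtain ⟨m, _, rfl⟩ := Finset.mem_image.mp hb
    exact hbase0 m
  have hinj : ∀ p ∈ Q ×ˢ I, ∀ q ∈ Q ×ˢ I,
      p.1 + p.2 • unitVec (d := d) j0 = q.1 + q.2 • unitVec j0 → p = q := by
    intro p hp q hq hpq
    have hp1 : p.1 ∈ Q := (Finset.mem_product.mp hp).1
    have hq1 : q.1 ∈ Q := (Finset.mem_product.mp hq).1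
    have hco : (p.1 + p.2 • unitVec (d := d) j0) j0 = (q.1 + q.2 • unitVec (d := d) j0) j0 := by
      rw [hpq]
    simp only [Pi.add_apply, Pi.smul_apply, unitVec_same, smul_eq_mul, mul_one,
      hQ0 _ hp1, hQ0 _ hq1, zero_add] at hco
    have h1 : p.1 = q.1 := by
      have := hpq
      rw [hco] at this
      exact add_right_cancel this
    exact Prod.ext h1 hco
  have hsupp : Function.support (dT r j0 x y)
      ⊆ ↑((Q ×ˢ I).image fun p : Site d × ℤ => p.1 + p.2 • unitVec j0) := by
    intro m hm
    have hmDb : m ∈ Db := dT_supp j0 x y hm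
    have hmT : m ∈ T := by rw [hT]; exact hDb.mem_toFinset.mpr hmDb
    rw [Finset.coe_image]
    refine ⟨(base m, m j0), ?_, hrecon m⟩
    rw [Finset.mem_coe, Finset.mem_product]
    exact ⟨Finset.mem_image_of_mem _ hmT, Finset.mem_image_of_mem _ hmT⟩
  rw [finsum_eq_finset_sum_of_support_subset _ hsupp, Finset.sum_image hinj,
    Finset.sum_product]
  apply Finset.sum_eq_zero
  intro b hb
  have hb0 : b j0 = 0 := hQ0 b hb
  have hIs : (Function.support fun k : ℤ => dT r j0 x y (b + k • unitVec j0)) ⊆ ↑I := by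
    intro k hk
    have hmDb : (b + k • unitVec j0) ∈ Db := dT_supp j0 x y hk
    have hco : (b + k • unitVec (d := d) j0) j0 = k := by
      simp only [Pi.add_apply, Pi.smul_apply, unitVec_same, smul_eq_mul, mul_one, hb0, zero_add]
    have hmT : (b + k • unitVec (d := d) j0) ∈ T := by
      rw [hT]; exact hDb.mem_toFinset.mpr hmDb
    rw [Finset.mem_coe, hI, ← hco]
    exact Finset.mem_image_of_mem _ hmT
  rw [← finsum_eq_finset_sum_of_support_subset _ hIs]
  exact lineSum_zero hr3 hr4 hx hy hfin j0 j1 hne b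

end CMproof
namespace CMproof

variable {d r : ℕ}

lemma vT_add (x y z : Site d → ZMod r) (n : Site d) :
    vT r x z n = vT r x y n + vT r y z n := by unfold vT; ring

lemma eT_add (j0 : Fin d) (x y z : Site d → ZMod r) (n : Site d) :
    eT r j0 x z n = eT r j0 x y n + eT r j0 y z n := by unfold eT dT; ring

lemma cocycle_M (j0 : Fin d) :
    IsCocycle (Xr d r)
      (fun p => gibbsDiff (fvD d r) (feD d r j0) p.val.1 p.val.2) := by
  intro x y z hxy hyz hxz
  show gibbsDiff (fvD d r) (feD d r j0) x z
      = gibbsDiff (fvD d r) (feD d r j0) x y + gibbsDiff (fvD d r) (feD d r j0) y z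
  rw [gibbs_eq, gibbs_eq, gibbs_eq]
  have hv : ∑ᶠ n, vT r x z n = (∑ᶠ n, vT r x y n) + ∑ᶠ n, vT r y z n := by
    rw [← finsum_add_distrib (vT_supp_fin hxy.2.2) (vT_supp_fin hyz.2.2)]
    exact finsum_congr (vT_add x y z)
  have he : ∑ᶠ n, eT r j0 x z n = (∑ᶠ n, eT r j0 x y n) + ∑ᶠ n, eT r j0 y z n := by
    rw [← finsum_add_distrib (eT_supp_fin hxy.2.2 j0) (eT_supp_fin hyz.2.2 j0)]
    exact finsum_congr (eT_add j0 x y z)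
  rw [hv, he]
  ring

lemma markov_M (j0 : Fin d) :
    IsMarkovProp (Xr d r)
      (fun p => gibbsDiff (fvD d r) (feD d r j0) p.val.1 p.val.2) := by
  intro x y x' y' hxy hxy' F hF hxyF hxyF' hxx' hyy'
  show gibbsDiff (fvD d r) (feD d r j0) x y = gibbsDiff (fvD d r) (feD d r j0) x' y'
  rw [gibbs_eq, gibbs_eq]
  have hVT : vT r x y = vT r x' y' := by
    funext n
    by_cases h1 : n ∈ F
    · unfold vT
      rw [hxx' n (Or.inl h1), hyy' n (Or.inl h1)]
    · unfold vT
      rw [hxyF n h1, hxyF' n h1]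
      ring
  have hET : eT r j0 x y = eT r j0 x' y' := by
    funext n
    by_cases h1 : n ∈ F
    · have ha : n + unitVec j0 ∈ F ∪ siteBdry F := by
        by_cases h2 : n + unitVec j0 ∈ F
        · exact Or.inl h2
        · exact Or.inr ⟨h2, n, h1, adjacent_add_unitVec n j0⟩
      unfold eT dT
      rw [hxx' n (Or.inl h1), hyy' n (Or.inl h1), hxx' _ ha, hyy' _ ha]
    · by_cases h2 : n + unitVec j0 ∈ F
      · have hb : n ∈ F ∪ siteBdry F :=
          Or.inr ⟨h1, n + unitVec j0, h2, adjacent_add_unitVec' n j0⟩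
        unfold eT dT
        rw [hxx' n hb, hyy' n hb, hxx' _ (Or.inl h2), hyy' _ (Or.inl h2)]
      · unfold eT dT
        rw [hxyF n h1, hxyF _ h2, hxyF' n h1, hxyF' _ h2]
        ring
  rw [hVT, hET]

lemma shiftinv_M (hr3 : 3 ≤ r) (hr4 : r ≠ 4) (j0 j1 : Fin d) (hne : j0 ≠ j1) :
    IsShiftInvCocycle (Xr d r)
      (fun p => gibbsDiff (fvD d r) (feD d r j0) p.val.1 p.val.2) := by
  intro v x y hxy hs
  show gibbsDiff (fvD d r) (feD d r j0) (shift v x) (shift v y)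
      = gibbsDiff (fvD d r) (feD d r j0) x y
  rw [gibbs_eq, gibbs_eq]
  -- vertex part
  have hvshift : ∀ n, vT r (shift v x) (shift v y) n = vT r x y (n + v) := fun n => rfl
  have h1 : (∑ᶠ n, vT r (shift v x) (shift v y) n) = ∑ᶠ n, vT r x y n := by
    rw [finsum_congr hvshift]
    exact finsum_comp_equiv (Equiv.addRight v)
  -- edge part
  have hdshift : ∀ n, dT r j0 (shift v x) (shift v y) n = dT r j0 x y (n + v) := by
    intro n
    unfold dT shift
    rw [add_right_comm]
  have he1 : ∀ n, eT r j0 (shift v x) (shift v y) n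
      = eT r j0 x y (n + v) + ((v j0 : ℤ) : ℝ) * dT r j0 x y (n + v) := by
    intro n
    unfold eT
    rw [hdshift]
    have hco : ((n + v) j0 : ℤ) = n j0 + v j0 := rfl
    rw [hco]
    push_cast
    ring
  have hfin1 : (Function.support fun n => eT r j0 x y (n + v)).Finite := by
    have hsub : (Function.support fun n => eT r j0 x y (n + v))
        ⊆ (fun n : Site d => n + v) ⁻¹' Function.support (eT r j0 x y) :=
      fun n hn => hn
    exact ((eT_supp_fin hxy.2.2 j0).preimage (add_left_injective v).injOn).subset hsub
  have hfin2 : (Function.support fun n => ((v j0 : ℤ) : ℝ) * dT r j0 x y (n + v)).Finite := by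
    have hsub : (Function.support fun n => ((v j0 : ℤ) : ℝ) * dT r j0 x y (n + v))
        ⊆ (fun n : Site d => n + v) ⁻¹' Function.support (dT r j0 x y) := by
      intro n hn
      simp only [Set.mem_preimage, Function.mem_support]
      intro h
      apply hn
      simp only [h, mul_zero]
    exact ((dT_supp_fin hxy.2.2 j0).preimage (add_left_injective v).injOn).subset hsub
  have hfin3 : (Function.support fun n => dT r j0 x y (n + v)).Finite := by
    have hsub : (Function.support fun n => dT r j0 x y (n + v))
        ⊆ (fun n : Site d => n + v) ⁻¹' Function.support (dT r j0 x y) :=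
      fun n hn => hn
    exact ((dT_supp_fin hxy.2.2 j0).preimage (add_left_injective v).injOn).subset hsub
  have h2 : (∑ᶠ n, eT r j0 (shift v x) (shift v y) n) = ∑ᶠ n, eT r j0 x y n := by
    rw [finsum_congr he1, finsum_add_distrib hfin1 hfin2]
    have hA : (∑ᶠ n, eT r j0 x y (n + v)) = ∑ᶠ n, eT r j0 x y n :=
      finsum_comp_equiv (Equiv.addRight v)
    have hB : (∑ᶠ n, ((v j0 : ℤ) : ℝ) * dT r j0 x y (n + v))
        = ((v j0 : ℤ) : ℝ) * ∑ᶠ n, dT r j0 x y (n + v) :=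
      (mul_finsum _ _).symm
    have hC : (∑ᶠ n, dT r j0 x y (n + v)) = ∑ᶠ n, dT r j0 x y n :=
      finsum_comp_equiv (Equiv.addRight v)
    rw [hA, hB, hC, total_zero hr3 hr4 hxy.1 hxy.2.1 hxy.2.2 j0 j1 hne]
    ring
  rw [h1, h2]

lemma adj_sum_pm {n m : Site d} (h : adjacent n m) :
    (∑ i, n i) - (∑ i, m i) = 1 ∨ (∑ i, n i) - (∑ i, m i) = -1 := by
  unfold adjacent at h
  have h1 : |∑ i, (n i - m i)| ≤ ∑ i, |n i - m i| := Finset.abs_sum_le_sum_abs _ _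
  have h2 : Even (∑ i, (|n i - m i| - (n i - m i))) := by
    apply Finset.even_sum
    intro i _
    rcases le_or_gt 0 (n i - m i) with hpos | hneg
    · rw [abs_of_nonneg hpos]
      simp
    · rw [abs_of_neg hneg]
      exact ⟨-(n i - m i), by ring⟩
  rw [Finset.sum_sub_distrib, h] at h2
  have h3 : (∑ i, (n i - m i)) = (∑ i, n i) - ∑ i, m i := Finset.sum_sub_distrib _ _
  rw [h, h3] at h1
  rw [h3] at h2
  obtain ⟨t, ht⟩ := h2
  rw [abs_le] at h1
  omega

end CMproof
namespace CMproof

variable {d r : ℕ}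

/-- parity of a site -/
def par (n : Site d) : ℤ := (∑ i, n i) % 2

/-- base configuration at level `a` -/
noncomputable def xa (r : ℕ) (a : ZMod r) : Site d → ZMod r :=
  fun n => a + ((par n : ℤ) : ZMod r)

/-- flipped configuration at level `a` -/
noncomputable def ya (r : ℕ) (j1 : Fin d) (a : ZMod r) : Site d → ZMod r := by
  classical
  exact Function.update (xa r a) (unitVec j1) (a - 1)

lemma par_n0 (j1 : Fin d) : par (unitVec (d := d) j1) = 1 := by
  unfold par
  rw [sum_unitVec]
  decide

lemma adj_par {n m : Site d} (h : adjacent n m) :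
    par n - par m = 1 ∨ par n - par m = -1 := by
  rcases adj_sum_pm h with h1 | h1 <;> unfold par <;> omega

lemma xa_mem (a : ZMod r) : xa r a ∈ Xr d r := by
  intro n m hadj
  have he : xa (d := d) r a n - xa r a m = ((par n - par m : ℤ) : ZMod r) := by
    unfold xa; push_cast; ring
  rw [he]
  rcases adj_par hadj with h | h <;> rw [h]
  · left; push_cast; ring
  · right; push_cast; ring

lemma par_adj_n0_left (j1 : Fin d) {m : Site d} (h : adjacent (unitVec (d := d) j1) m) :
    par m = 0 := by
  have h1 := adj_sum_pm h
  rw [sum_unitVec] at h1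
  unfold par
  omega

lemma par_adj_n0_right (j1 : Fin d) {m : Site d} (h : adjacent m (unitVec (d := d) j1)) :
    par m = 0 := by
  have h1 := adj_sum_pm h
  rw [sum_unitVec] at h1
  unfold par
  omega

lemma ya_mem (hr3 : 3 ≤ r) (j1 : Fin d) (a : ZMod r) : ya r j1 a ∈ Xr d r := by
  classical
  intro n m hadj
  by_cases hn : n = unitVec j1 <;> by_cases hm : m = unitVec j1
  · exfalso
    subst hn; subst hm
    have h1 : (∑ i, |unitVec (d := d) j1 i - unitVec j1 i|) = 1 := hadj
    simp at h1
  · subst hn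
    have hpm : par m = 0 := par_adj_n0_left j1 hadj
    have e1 : ya (d := d) r j1 a (unitVec j1) = a - 1 := by
      unfold ya; simp [Function.update_self]
    have e2 : ya (d := d) r j1 a m = a := by
      unfold ya
      simp only [Function.update_of_ne hm]
      unfold xa; rw [hpm]; push_cast; ring
    rw [e1, e2]
    right; ring
  · subst hm
    have hpn : par n = 0 := par_adj_n0_right j1 hadj
    have e1 : ya (d := d) r j1 a (unitVec j1) = a - 1 := by
      unfold ya; simp [Function.update_self]
    have e2 : ya (d := d) r j1 a n = a := by
      unfold ya
      simp only [Function.update_of_ne hn]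
      unfold xa; rw [hpn]; push_cast; ring
    rw [e1, e2]
    left; ring
  · have e1 : ya (d := d) r j1 a n = xa r a n := by
      unfold ya; simp only [Function.update_of_ne hn]
    have e2 : ya (d := d) r j1 a m = xa r a m := by
      unfold ya; simp only [Function.update_of_ne hm]
    rw [e1, e2]
    exact xa_mem a n m hadj

lemma diff_sub (j1 : Fin d) (a : ZMod r) :
    {n | xa (d := d) r a n ≠ ya r j1 a n} ⊆ {unitVec j1} := by
  classical
  intro n hn
  by_contra hne
  apply hn
  unfold ya
  simp only [Function.update_of_ne hne]

lemma pairs_mem (hr3 : 3 ≤ r) (j1 : Fin d) (a : ZMod r) :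
    (xa (d := d) r a, ya r j1 a) ∈ DeltaOf (Xr d r) :=
  ⟨xa_mem a, ya_mem hr3 j1 a, (Set.finite_singleton _).subset (diff_sub j1 a)⟩

lemma v_xa_n0 (j1 : Fin d) (a : ZMod r) : xa (d := d) r a (unitVec j1) = a + 1 := by
  unfold xa; rw [par_n0]; push_cast; ring

lemma v_ya_n0 (j1 : Fin d) (a : ZMod r) : ya (d := d) r j1 a (unitVec j1) = a - 1 := by
  classical
  unfold ya; simp [Function.update_self]

lemma par_plus (j1 j : Fin d) : par (unitVec (d := d) j1 + unitVec j) = 0 := by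
  unfold par
  simp only [Pi.add_apply]
  rw [Finset.sum_add_distrib, sum_unitVec, sum_unitVec]
  decide

lemma par_minus (j1 j : Fin d) : par (unitVec (d := d) j1 - unitVec j) = 0 := by
  unfold par
  simp only [Pi.sub_apply]
  rw [Finset.sum_sub_distrib, sum_unitVec, sum_unitVec]
  decide

lemma ne_plus (j1 j : Fin d) : unitVec (d := d) j1 + unitVec j ≠ unitVec j1 := by
  intro h
  exact unitVec_ne_zero j (add_eq_left.mp h)

lemma ne_minus (j1 j : Fin d) : unitVec (d := d) j1 - unitVec j ≠ unitVec j1 := by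
  intro h
  exact unitVec_ne_zero j (sub_eq_self.mp h)

lemma minus_plus (j1 j : Fin d) :
    (unitVec (d := d) j1 - unitVec j) + unitVec j = unitVec j1 := sub_add_cancel _ _

lemma v_xa_plus (j1 j : Fin d) (a : ZMod r) :
    xa (d := d) r a (unitVec j1 + unitVec j) = a := by
  unfold xa; rw [par_plus]; push_cast; ring

lemma v_xa_minus (j1 j : Fin d) (a : ZMod r) :
    xa (d := d) r a (unitVec j1 - unitVec j) = a := by
  unfold xa; rw [par_minus]; push_cast; ring

lemma v_ya_plus (j1 j : Fin d) (a : ZMod r) :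
    ya (d := d) r j1 a (unitVec j1 + unitVec j) = a := by
  classical
  unfold ya
  simp only [Function.update_of_ne (ne_plus j1 j)]
  exact v_xa_plus j1 j a

lemma v_ya_minus (j1 j : Fin d) (a : ZMod r) :
    ya (d := d) r j1 a (unitVec j1 - unitVec j) = a := by
  classical
  unfold ya
  simp only [Function.update_of_ne (ne_minus j1 j)]
  exact v_xa_minus j1 j a

lemma sZ_up (hr3 : 3 ≤ r) (a : ZMod r) : sZ r a (a + 1) = 1 := by
  unfold sZ
  rw [if_pos]
  ring

lemma sZ_down (hr3 : 3 ≤ r) (a : ZMod r) : sZ r a (a - 1) = -1 := by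
  unfold sZ
  rw [if_neg]
  have he : a - 1 - a = -1 := by ring
  rw [he]
  exact neg_one_ne_one hr3

lemma M_val (hr3 : 3 ≤ r) (j0 j1 : Fin d) (hne : j0 ≠ j1) (a : ZMod r) :
    gibbsDiff (fvD d r) (feD d r j0) (xa r a) (ya r j1 a)
      = ((((1 : ZMod r) - a).val : ℕ) : ℝ) - ((((-1 : ZMod r) - a).val : ℕ) : ℝ) - 2 := by
  classical
  rw [gibbs_eq]
  have hv : (∑ᶠ n, vT r (xa r a) (ya r j1 a) n)
      = ((((1 : ZMod r) - a).val : ℕ) : ℝ) - ((((-1 : ZMod r) - a).val : ℕ) : ℝ) := by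
    rw [finsum_eq_single _ (unitVec j1)]
    · unfold vT
      rw [v_ya_n0, v_xa_n0]
      have e1 : -(a - 1) = (1 : ZMod r) - a := by ring
      have e2 : -(a + 1) = (-1 : ZMod r) - a := by ring
      rw [e1, e2]
    · intro n hn
      unfold vT
      have : ya (d := d) r j1 a n = xa r a n := by
        unfold ya; simp only [Function.update_of_ne hn]
      rw [this]
      ring
  have hpairne : unitVec (d := d) j1 - unitVec j0 ≠ unitVec j1 := ne_minus j1 j0
  have hsup : Function.support (eT r j0 (xa r a) (ya r j1 a))
      ⊆ ↑({unitVec j1 - unitVec j0, unitVec j1} : Finset (Site d)) := by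
    intro n hn
    have hd := dT_supp j0 _ _ (eT_supp j0 _ _ hn)
    simp only [Finset.coe_insert, Finset.coe_singleton, Set.mem_insert_iff,
      Set.mem_singleton_iff]
    rcases hd with h | h
    · right
      exact diff_sub j1 a h
    · left
      have h2 : n + unitVec j0 = unitVec j1 := diff_sub j1 a h
      exact eq_sub_of_add_eq h2
  have he : (∑ᶠ n, eT r j0 (xa r a) (ya r j1 a) n) = -2 := by
    rw [finsum_eq_finset_sum_of_support_subset _ hsup, Finset.sum_pair hpairne]
    have hterm1 : eT r j0 (xa r a) (ya r j1 a) (unitVec j1) = 0 := by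
      unfold eT
      rw [unitVec_other hne]
      simp
    have hterm2 : eT r j0 (xa r a) (ya r j1 a) (unitVec j1 - unitVec j0) = -2 := by
      unfold eT dT
      have hco : (unitVec (d := d) j1 - unitVec j0) j0 = -1 := by
        simp only [Pi.sub_apply, unitVec_same, unitVec_other hne]
        ring
      have hsite : (unitVec (d := d) j1 - unitVec j0) + unitVec j0 = unitVec j1 :=
        minus_plus j1 j0
      rw [hco, hsite, v_ya_minus, v_xa_minus, v_ya_n0, v_xa_n0, sZ_down hr3 a, sZ_up hr3 a]
      norm_num
    rw [hterm1, hterm2]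
    ring
  rw [hv, he]
  ring

lemma G_val (hr3 : 3 ≤ r) (j1 : Fin d) (f : ZMod r → ℝ) (g : Fin d → ZMod r → ZMod r → ℝ)
    (a : ZMod r) :
    gibbsDiff (fun _ => f) (fun _ => g) (xa (d := d) r a) (ya r j1 a)
      = (f (a - 1) - f (a + 1))
        + ((∑ j, (g j (a - 1) a - g j (a + 1) a))
           + ∑ j, (g j a (a - 1) - g j a (a + 1))) := by
  classical
  unfold gibbsDiff
  have hv : (∑ᶠ n, (f (ya (d := d) r j1 a n) - f (xa r a n))) = f (a - 1) - f (a + 1) := by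
    rw [finsum_eq_single _ (unitVec j1)]
    · rw [v_ya_n0, v_xa_n0]
    · intro n hn
      have : ya (d := d) r j1 a n = xa r a n := by
        unfold ya; simp only [Function.update_of_ne hn]
      rw [this]
      ring
  have hSS : Function.support (fun n => ∑ j : Fin d,
        (g j (ya (d := d) r j1 a n) (ya r j1 a (n + unitVec j))
          - g j (xa r a n) (xa r a (n + unitVec j))))
      ⊆ ↑(insert (unitVec (d := d) j1)
          (Finset.image (fun j : Fin d => unitVec j1 - unitVec j) Finset.univ)) := by
    intro n hn
    obtain ⟨j, -, hj⟩ := Finset.exists_ne_zero_of_sum_ne_zero hn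
    simp only [Finset.coe_insert, Set.mem_insert_iff, Finset.coe_image, Finset.coe_univ,
      Set.image_univ, Set.mem_range]
    by_contra hc
    push_neg at hc
    obtain ⟨hc1, hc2⟩ := hc
    have hn1 : n ≠ unitVec j1 := hc1
    have hn2 : n + unitVec j ≠ unitVec j1 := by
      intro h
      exact hc2 j (eq_sub_of_add_eq h).symm
    apply hj
    have e1 : ya (d := d) r j1 a n = xa r a n := by
      unfold ya; simp only [Function.update_of_ne hn1]
    have e2 : ya (d := d) r j1 a (n + unitVec j) = xa r a (n + unitVec j) := by
      unfold ya; simp only [Function.update_of_ne hn2]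
    rw [e1, e2]
    ring
  have hn0notin : unitVec (d := d) j1
      ∉ Finset.image (fun j : Fin d => unitVec j1 - unitVec j) Finset.univ := by
    simp only [Finset.mem_image, Finset.mem_univ, true_and, not_exists]
    intro j h
    exact ne_minus j1 j h
  have hinjj : ∀ j ∈ Finset.univ, ∀ k ∈ Finset.univ,
      unitVec (d := d) j1 - unitVec j = unitVec j1 - unitVec k → j = k := by
    intro j _ k _ h
    exact unitVec_inj (sub_right_inj.mp h)
  have he : (∑ᶠ n, ∑ j : Fin d,
        (g j (ya (d := d) r j1 a n) (ya r j1 a (n + unitVec j))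
          - g j (xa r a n) (xa r a (n + unitVec j))))
      = (∑ j, (g j (a - 1) a - g j (a + 1) a))
        + ∑ j, (g j a (a - 1) - g j a (a + 1)) := by
    rw [finsum_eq_finset_sum_of_support_subset _ hSS, Finset.sum_insert hn0notin,
      Finset.sum_image hinjj]
    congr 1
    · apply Finset.sum_congr rfl
      intro j _
      rw [v_ya_n0, v_xa_n0, v_ya_plus, v_xa_plus]
    · apply Finset.sum_congr rfl
      intro k _
      rw [Finset.sum_eq_single k]
      · rw [minus_plus, v_ya_minus, v_xa_minus, v_ya_n0, v_xa_n0]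
      · intro j _ hjk
        have h1 : unitVec (d := d) j1 - unitVec k ≠ unitVec j1 := ne_minus j1 k
        have h2 : (unitVec (d := d) j1 - unitVec k) + unitVec j ≠ unitVec j1 := by
          intro h
          have h' : (unitVec (d := d) j1 - unitVec k) + unitVec j
              = (unitVec j1 - unitVec k) + unitVec k := by
            rw [h, minus_plus]
          exact hjk (unitVec_inj (add_left_cancel h'))
        have e1 : ya (d := d) r j1 a (unitVec j1 - unitVec k) = xa r a (unitVec j1 - unitVec k) := by
          unfold ya; simp only [Function.update_of_ne h1]
        have e2 : ya (d := d) r j1 a ((unitVec j1 - unitVec k) + unitVec j)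
            = xa r a ((unitVec j1 - unitVec k) + unitVec j) := by
          unfold ya; simp only [Function.update_of_ne h2]
        rw [e1, e2]
        ring
      · intro h
        exact absurd (Finset.mem_univ k) h
  rw [hv, he]

end CMproof
namespace CMproof

variable {d r : ℕ}

lemma sum_val_shift [NeZero r] (c : ZMod r) :
    ∑ a : ZMod r, (((c - a).val : ℕ) : ℝ) = ∑ a : ZMod r, ((a.val : ℕ) : ℝ) :=
  Fintype.sum_bijective (fun a => c - a) (Equiv.subLeft c).bijective _ _ (fun _ => rfl)

lemma sum_f1 [NeZero r] (f : ZMod r → ℝ) : ∑ a : ZMod r, f (a - 1) = ∑ a : ZMod r, f a :=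
  Fintype.sum_bijective (fun a => a - 1) (Equiv.subRight (1 : ZMod r)).bijective _ _
    (fun _ => rfl)

lemma sum_f2 [NeZero r] (f : ZMod r → ℝ) : ∑ a : ZMod r, f (a + 1) = ∑ a : ZMod r, f a :=
  Fintype.sum_bijective (fun a => a + 1) (Equiv.addRight (1 : ZMod r)).bijective _ _
    (fun _ => rfl)

lemma sum_g1 [NeZero r] (g : ZMod r → ZMod r → ℝ) :
    ∑ a : ZMod r, g (a - 1) a = ∑ a : ZMod r, g a (a + 1) :=
  Fintype.sum_bijective (fun a => a - 1) (Equiv.subRight (1 : ZMod r)).bijective _ _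
    (fun a => by rw [sub_add_cancel])

lemma sum_g2 [NeZero r] (g : ZMod r → ZMod r → ℝ) :
    ∑ a : ZMod r, g (a + 1) a = ∑ a : ZMod r, g a (a - 1) :=
  Fintype.sum_bijective (fun a => a + 1) (Equiv.addRight (1 : ZMod r)).bijective _ _
    (fun a => by rw [add_sub_cancel_right])

end CMproof

/-- For `d ≥ 2`, `r ∉ {1,2,4}`: there exists a shift-invariant Markov
cocycle on `X_r` which is the Gibbs cocycle of some nearest neighbor interaction but not
of any shift-invariant one: `G^σ_{X_r} ≠ G_{X_r} ∩ M^σ_{X_r}`. -/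
theorem exists_inv_markov_cocycle_gibbs_not_inv_gibbs
    (d r : ℕ) (hd : 2 ≤ d) (hr0 : 0 < r) (hr1 : r ≠ 1) (hr2 : r ≠ 2) (hr4 : r ≠ 4) :
    ∃ M : ↥(DeltaOf (Xr d r)) → ℝ,
      (IsCocycle (Xr d r) M ∧ IsMarkovProp (Xr d r) M ∧ IsShiftInvCocycle (Xr d r) M) ∧
      (∃ (fv : Site d → ZMod r → ℝ) (fe : Site d → Fin d → ZMod r → ZMod r → ℝ),
        ∀ p : ↥(DeltaOf (Xr d r)), M p = gibbsDiff fv fe p.val.1 p.val.2) ∧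
      ¬ (∃ (f : ZMod r → ℝ) (g : Fin d → ZMod r → ZMod r → ℝ),
        ∀ p : ↥(DeltaOf (Xr d r)),
          M p = gibbsDiff (fun _ => f) (fun _ => g) p.val.1 p.val.2) := by
  classical
  haveI : NeZero r := ⟨by omega⟩
  have hr3 : 3 ≤ r := by omega
  have hd0 : 0 < d := by omega
  have hd1 : 1 < d := by omega
  refine ⟨fun p => gibbsDiff (CMproof.fvD d r) (CMproof.feD d r ⟨0, hd0⟩) p.val.1 p.val.2,
    ⟨CMproof.cocycle_M _, CMproof.markov_M _,
      CMproof.shiftinv_M hr3 hr4 ⟨0, hd0⟩ ⟨1, hd1⟩ (by simp [Fin.ext_iff])⟩,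
    ⟨CMproof.fvD d r, CMproof.feD d r ⟨0, hd0⟩, fun p => rfl⟩, ?_⟩
  rintro ⟨f, g, hfg⟩
  set j0 : Fin d := ⟨0, hd0⟩ with hj0
  set j1 : Fin d := ⟨1, hd1⟩ with hj1
  have hne : j0 ≠ j1 := by simp [hj0, hj1, Fin.ext_iff]
  have hM : ∀ a : ZMod r,
      gibbsDiff (CMproof.fvD d r) (CMproof.feD d r j0) (CMproof.xa r a) (CMproof.ya r j1 a)
        = gibbsDiff (fun _ => f) (fun _ => g) (CMproof.xa r a) (CMproof.ya r j1 a) :=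
    fun a => hfg ⟨(CMproof.xa r a, CMproof.ya r j1 a), CMproof.pairs_mem hr3 j1 a⟩
  have hsum : ∑ a : ZMod r, gibbsDiff (CMproof.fvD d r) (CMproof.feD d r j0)
        (CMproof.xa r a) (CMproof.ya r j1 a)
      = ∑ a : ZMod r, gibbsDiff (fun _ => f) (fun _ => g)
        (CMproof.xa r a) (CMproof.ya r j1 a) :=
    Finset.sum_congr rfl (fun a _ => hM a)
  rw [Finset.sum_congr rfl (fun a _ => CMproof.M_val hr3 j0 j1 hne a),
      Finset.sum_congr rfl (fun a _ => CMproof.G_val hr3 j1 f g a)] at hsum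
  have hL : ∑ a : ZMod r,
      (((((1 : ZMod r) - a).val : ℕ) : ℝ) - ((((-1 : ZMod r) - a).val : ℕ) : ℝ) - 2)
      = -2 * (r : ℝ) := by
    rw [Finset.sum_sub_distrib, Finset.sum_sub_distrib, CMproof.sum_val_shift (1 : ZMod r),
      CMproof.sum_val_shift (-1 : ZMod r), Finset.sum_const, Finset.card_univ, ZMod.card,
      nsmul_eq_mul]
    ring
  have hA : ∑ a : ZMod r, ∑ j : Fin d, (g j (a - 1) a - g j (a + 1) a)
      = ∑ j : Fin d, ((∑ a : ZMod r, g j a (a + 1)) - ∑ a : ZMod r, g j a (a - 1)) := by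
    rw [Finset.sum_comm]
    apply Finset.sum_congr rfl
    intro j _
    rw [Finset.sum_sub_distrib, CMproof.sum_g1 (g j), CMproof.sum_g2 (g j)]
  have hB : ∑ a : ZMod r, ∑ j : Fin d, (g j a (a - 1) - g j a (a + 1))
      = ∑ j : Fin d, ((∑ a : ZMod r, g j a (a - 1)) - ∑ a : ZMod r, g j a (a + 1)) := by
    rw [Finset.sum_comm]
    apply Finset.sum_congr rfl
    intro j _
    rw [Finset.sum_sub_distrib]
  have hR : ∑ a : ZMod r, ((f (a - 1) - f (a + 1))
      + ((∑ j : Fin d, (g j (a - 1) a - g j (a + 1) a))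
         + ∑ j : Fin d, (g j a (a - 1) - g j a (a + 1)))) = 0 := by
    rw [Finset.sum_add_distrib]
    have hf : ∑ a : ZMod r, (f (a - 1) - f (a + 1)) = 0 := by
      rw [Finset.sum_sub_distrib, CMproof.sum_f1 f, CMproof.sum_f2 f]
      ring
    have hg : ∑ a : ZMod r, ((∑ j : Fin d, (g j (a - 1) a - g j (a + 1) a))
        + ∑ j : Fin d, (g j a (a - 1) - g j a (a + 1))) = 0 := by
      rw [Finset.sum_add_distrib, hA, hB, ← Finset.sum_add_distrib]
      apply Finset.sum_eq_zero
      intro j _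
      ring
    rw [hf, hg]
    ring
  rw [hL, hR] at hsum
  have hrge : (1 : ℝ) ≤ (r : ℝ) := by exact_mod_cast hr0
  linarith
end

section
/- Let d ≥ 2, let x̂ : ℤ^d → ℤ be a height function and F ⊆ ℤ^d a finite set, and let Ht_{x̂,F} := { ŷ a height function : ŷ_n = x̂_n for all n ∉ F }. Then Ht_{x̂,F} has a maximum element with respect to the pointwise partial order (ŷ ≥ ẑ iff ŷ_n ≥ ẑ_n for all n); moreover, if ŷ is this maximum, then for every n ∈ F, ŷ_n = min { x̂_k + ‖n−k‖₁ : k ∈ ∂F }. -/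
open scoped BigOperators

lemma key_aux {d : ℕ} (x : Site d → ℤ) (hx : IsHeightFn x) :
    ∀ N : ℕ, ∀ n k : Site d, (∑ i, |n i - k i|) = (N : ℤ) →
      |x n - x k| ≤ (N : ℤ) ∧ Even (x n - x k + (N : ℤ)) := by
  intro N
  induction N with
  | zero =>
    intro n k h
    have hnk : n = k := by
      funext i
      have h1 := (Finset.sum_eq_zero_iff_of_nonneg
        (fun i _ => abs_nonneg (n i - k i))).mp (by exact_mod_cast h) i (Finset.mem_univ i)
      have := abs_eq_zero.mp h1
      omega
    subst hnk
    simp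
  | succ N ih =>
    intro n k h
    have hne : ∃ i, n i ≠ k i := by
      by_contra hc
      push_neg at hc
      have h0 : (∑ i, |n i - k i|) = 0 :=
        Finset.sum_eq_zero (fun i _ => by rw [hc i]; simp)
      rw [h0] at h
      omega
    obtain ⟨i, hi⟩ := hne
    set s : ℤ := if k i < n i then 1 else -1 with hs
    set n' : Site d := Function.update n i (n i - s) with hn'
    have hii : n' i = n i - s := by simp [hn']
    have hoff : ∀ j, j ≠ i → n' j = n j := fun j hj => Function.update_of_ne hj _ _
    have habs1 : |n' i - k i| = |n i - k i| - 1 := by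
      rcases lt_or_gt_of_ne hi with h1 | h1
      · have e : n' i - k i = n i - k i + 1 := by
          rw [hii, hs, if_neg (by omega)]; ring
        rw [e, abs_of_nonpos (by omega), abs_of_neg (by omega)]; ring
      · have e : n' i - k i = n i - k i - 1 := by
          rw [hii, hs, if_pos (by omega)]; ring
        rw [e, abs_of_nonneg (by omega), abs_of_pos (by omega)]
    have hsum' : (∑ j, |n' j - k j|) = (N : ℤ) := by
      have e1 : |n' i - k i| + ∑ j ∈ Finset.univ.erase i, |n' j - k j|
          = ∑ j, |n' j - k j| :=
        Finset.add_sum_erase Finset.univ (fun j => |n' j - k j|) (Finset.mem_univ i)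
      have e2 : |n i - k i| + ∑ j ∈ Finset.univ.erase i, |n j - k j|
          = ∑ j, |n j - k j| :=
        Finset.add_sum_erase Finset.univ (fun j => |n j - k j|) (Finset.mem_univ i)
      have e3 : ∑ j ∈ Finset.univ.erase i, |n' j - k j|
          = ∑ j ∈ Finset.univ.erase i, |n j - k j| :=
        Finset.sum_congr rfl (fun j hj => by rw [hoff j (Finset.ne_of_mem_erase hj)])
      rw [← e1, e3, habs1]
      push_cast at h ⊢
      omega
    have hadj : adjacent n n' := by
      unfold adjacent
      rw [Finset.sum_eq_single_of_mem i (Finset.mem_univ i)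
        (fun j _ hj => by rw [hoff j hj]; simp)]
      rw [hii]
      have : n i - (n i - s) = s := by ring
      rw [this, hs]
      rcases ite_eq_or_eq (k i < n i) (1:ℤ) (-1) with h1 | h1 <;> rw [h1] <;> simp
    have hstep := hx n n' hadj
    obtain ⟨hle, heven⟩ := ih n' k hsum'
    constructor
    · calc |x n - x k| ≤ |x n - x n'| + |x n' - x k| := abs_sub_le _ _ _
        _ ≤ 1 + N := by rw [hstep]; omega
        _ = ((N+1 : ℕ) : ℤ) := by push_cast; ring
    · obtain ⟨t, ht⟩ := heven
      have h1 : x n - x n' = 1 ∨ x n - x n' = -1 := abs_eq (by norm_num) |>.mp hstep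
      rcases h1 with h1 | h1
      · exact ⟨t + 1, by push_cast; omega⟩
      · exact ⟨t, by push_cast; omega⟩

lemma lip {d : ℕ} (x : Site d → ℤ) (hx : IsHeightFn x) (n k : Site d) :
    |x n - x k| ≤ ∑ i, |n i - k i| := by
  have hnn : 0 ≤ ∑ i, |n i - k i| := Finset.sum_nonneg fun i _ => abs_nonneg _
  have := (key_aux x hx (∑ i, |n i - k i|).toNat n k (by omega)).1
  omega

lemma par {d : ℕ} (x : Site d → ℤ) (hx : IsHeightFn x) (n k : Site d) :
    Even (x n - x k + ∑ i, |n i - k i|) := by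
  have hnn : 0 ≤ ∑ i, |n i - k i| := Finset.sum_nonneg fun i _ => abs_nonneg _
  have := (key_aux x hx (∑ i, |n i - k i|).toNat n k (by omega)).2
  obtain ⟨t, ht⟩ := this
  exact ⟨t, by omega⟩

/-- For `d ≥ 2`, a height function `x̂` and a finite set `F ⊆ ℤ^d`, the
set of height functions agreeing with `x̂` off `F` has a maximum with respect to the
pointwise order; any such maximum `ŷ` satisfies, for every `n ∈ F`,
`ŷ_n = min { x̂_k + ‖n - k‖₁ : k ∈ ∂F }`. -/
theorem maximal_height_function
    (d : ℕ) (hd : 2 ≤ d) (xh : Site d → ℤ) (hx : IsHeightFn xh)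
    (F : Set (Site d)) (hF : F.Finite) :
    (∃ yh : Site d → ℤ, IsHeightFn yh ∧ (∀ n ∉ F, yh n = xh n) ∧
      ∀ zh : Site d → ℤ, IsHeightFn zh → (∀ n ∉ F, zh n = xh n) →
        ∀ n : Site d, zh n ≤ yh n) ∧
    (∀ yh : Site d → ℤ, IsHeightFn yh → (∀ n ∉ F, yh n = xh n) →
      (∀ zh : Site d → ℤ, IsHeightFn zh → (∀ n ∉ F, zh n = xh n) →
        ∀ n : Site d, zh n ≤ yh n) →
      ∀ n ∈ F,
        IsLeast {v : ℤ | ∃ k ∈ siteBdry F, v = xh k + ∑ i, |n i - k i|} (yh n)) := by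
  classical
  by_cases hFe : F.Nonempty
  · -- boundary is nonempty
    obtain ⟨n₀, hn₀⟩ := hFe
    have hd0 : 0 < d := by omega
    set i0 : Fin d := ⟨0, hd0⟩ with hi0
    obtain ⟨nmax, hnmaxF, hnmax⟩ := Finset.exists_max_image hF.toFinset (fun p => p i0)
      ⟨n₀, hF.mem_toFinset.mpr hn₀⟩
    set m0 : Site d := Function.update nmax i0 (nmax i0 + 1) with hm0def
    have hm0i : m0 i0 = nmax i0 + 1 := by simp [hm0def]
    have hadj0 : adjacent nmax m0 := by
      unfold adjacent
      rw [Finset.sum_eq_single_of_mem i0 (Finset.mem_univ i0)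
        (fun j _ hj => by rw [hm0def, Function.update_of_ne hj]; simp)]
      rw [hm0i]; simp
    have hm0 : m0 ∈ siteBdry F := by
      refine ⟨?_, nmax, hF.mem_toFinset.mp hnmaxF, hadj0⟩
      intro hcon
      have := hnmax m0 (hF.mem_toFinset.mpr hcon)
      omega
    -- the least-element function
    have hex : ∀ n : Site d, ∃ lb : ℤ,
        (∃ k ∈ siteBdry F, lb = xh k + ∑ i, |n i - k i|) ∧
        ∀ v : ℤ, (∃ k ∈ siteBdry F, v = xh k + ∑ i, |n i - k i|) → lb ≤ v := by
      intro n
      apply Int.exists_least_of_bdd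
      · refine ⟨xh n, ?_⟩
        rintro v ⟨k, hk, rfl⟩
        have h1 := lip xh hx n k
        have h2 := le_abs_self (xh n - xh k)
        omega
      · exact ⟨xh m0 + ∑ i, |n i - m0 i|, m0, hm0, rfl⟩
    choose f hfmem hflb using hex
    have hub : ∀ z : Site d → ℤ, IsHeightFn z → (∀ p ∉ F, z p = xh p) →
        ∀ n, z n ≤ f n := by
      intro z hz hzF n
      obtain ⟨k, hk, hfk⟩ := hfmem n
      have h1 : |z n - z k| ≤ ∑ i, |n i - k i| := lip z hz n k
      have h2 : z k = xh k := hzF k hk.1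
      have h3 := le_abs_self (z n - z k)
      omega
    have hxle : ∀ n, xh n ≤ f n := hub xh hx (fun _ _ => rfl)
    set y : Site d → ℤ := fun n => if n ∈ F then f n else xh n with hy
    have hadjsymm : ∀ n m : Site d, adjacent n m → adjacent m n := by
      intro n m h
      unfold adjacent at h ⊢
      rw [Finset.sum_congr rfl (fun i _ => abs_sub_comm (m i) (n i))]
      exact h
    have hyx_even : ∀ n, Even (y n - xh n) := by
      intro n
      by_cases h : n ∈ F
      · simp only [hy, if_pos h]
        obtain ⟨k, hk, hfk⟩ := hfmem n
        obtain ⟨t, ht⟩ := par xh hx n k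
        exact ⟨(∑ i, |n i - k i|) - t, by omega⟩
      · simp [hy, if_neg h]
    have hmix : ∀ n m : Site d, adjacent n m → n ∈ F → m ∉ F → |f n - xh m| ≤ 1 := by
      intro n m hadj hn hm
      have hmB : m ∈ siteBdry F := ⟨hm, n, hn, hadj⟩
      have h1 : f n ≤ xh m + ∑ i, |n i - m i| := hflb n _ ⟨m, hmB, rfl⟩
      have h2 : (∑ i, |n i - m i|) = 1 := hadj
      have h3 : xh n - xh m = 1 ∨ xh n - xh m = -1 :=
        (abs_eq (by norm_num)).mp (hx n m hadj)
      have h4 := hxle n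
      rw [abs_le]
      omega
    have hytri : ∀ n m : Site d, adjacent n m → n ∈ F → m ∈ F → f n ≤ f m + 1 := by
      intro n m hadj hn hm
      obtain ⟨k, hk, hfk⟩ := hfmem m
      have h1 : f n ≤ xh k + ∑ i, |n i - k i| := hflb n _ ⟨k, hk, rfl⟩
      have htri : (∑ i, |n i - k i|) ≤ (∑ i, |n i - m i|) + ∑ i, |m i - k i| := by
        rw [← Finset.sum_add_distrib]
        exact Finset.sum_le_sum fun i _ => abs_sub_le _ _ _
      have h2 : (∑ i, |n i - m i|) = 1 := hadj
      omega
    have hyheight : IsHeightFn y := by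
      intro n m hadj
      have hle1 : |y n - y m| ≤ 1 := by
        by_cases hn : n ∈ F <;> by_cases hm : m ∈ F
        · have e1 := hytri n m hadj hn hm
          have e2 := hytri m n (hadjsymm n m hadj) hm hn
          simp only [hy, if_pos hn, if_pos hm]
          rw [abs_le]; omega
        · have := hmix n m hadj hn hm
          simp only [hy, if_pos hn, if_neg hm]; exact this
        · have := hmix m n (hadjsymm n m hadj) hm hn
          simp only [hy, if_neg hn, if_pos hm]
          rw [abs_sub_comm]; exact this
        · simp only [hy, if_neg hn, if_neg hm]
          exact le_of_eq (hx n m hadj)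
      obtain ⟨a, ha⟩ := hyx_even n
      obtain ⟨b, hb⟩ := hyx_even m
      have h3 : xh n - xh m = 1 ∨ xh n - xh m = -1 :=
        (abs_eq (by norm_num)).mp (hx n m hadj)
      have h4 := abs_le.mp hle1
      rw [abs_eq (by norm_num : (0:ℤ) ≤ 1)]
      omega
    refine ⟨⟨y, hyheight, fun n hn => by simp [hy, if_neg hn], ?_⟩, ?_⟩
    · intro z hz hzF n
      by_cases hn : n ∈ F
      · simp only [hy, if_pos hn]
        exact hub z hz hzF n
      · simp only [hy, if_neg hn]
        rw [hzF n hn]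
    · intro yh hyh hyhF hyhmax n hn
      have h1 : yh n ≤ f n := hub yh hyh hyhF n
      have h2 : y n ≤ yh n := hyhmax y hyheight (fun p hp => by simp [hy, if_neg hp]) n
      have h3 : y n = f n := by simp [hy, if_pos hn]
      have heq : yh n = f n := le_antisymm h1 (by rw [← h3]; exact h2)
      rw [heq]
      exact ⟨hfmem n, fun v hv => hflb n v hv⟩
  · push_neg at hFe
    subst hFe
    refine ⟨⟨xh, hx, fun _ _ => rfl, ?_⟩, ?_⟩
    · intro z hz hzF n
      rw [hzF n (Set.notMem_empty n)]
    · intro yh _ _ _ n hn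
      exact absurd hn (Set.notMem_empty n)
end

section
/- Let d ≥ 2, let F ⊆ ℤ^d be a finite set, and let x̂ : ℤ^d → ℤ be a height function with Range_{∂F}(x̂) > 2. Then there exists a height function ŷ with ŷ_n = x̂_n for all n ∉ F such that Range_F(ŷ) = Range_{∂F}(ŷ) − 2 = Range_{∂F}(x̂) − 2. -/
open scoped BigOperators

/-- `Range_A(h) = max_{n ∈ A} h n - min_{n ∈ A} h n`. -/
noncomputable def RangeOn {d : ℕ} (h : Site d → ℤ) (A : Set (Site d)) : ℤ :=
  sSup (h '' A) - sInf (h '' A)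

/-- The folding map used to flatten a height function inside `F`. -/
def gAux (m0 M t : ℤ) : ℤ :=
  if M - 1 ≤ t then M - 1 - (t - (M - 1)) % 2
  else if t ≤ m0 + 1 then m0 + 1 + (m0 + 1 - t) % 2
  else t

lemma gAux_diff (m0 M : ℤ) (h3 : m0 + 3 ≤ M) {s t : ℤ}
    (h : s - t = 1 ∨ s - t = -1) : |gAux m0 M s - gAux m0 M t| = 1 := by
  rw [abs_eq (by norm_num : (0:ℤ) ≤ 1)]
  unfold gAux
  split_ifs <;> omega

lemma gAux_bdry (m0 M : ℤ) (h3 : m0 + 3 ≤ M) {s t : ℤ}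
    (h : s - t = 1 ∨ s - t = -1) (h1 : m0 ≤ t) (h2 : t ≤ M) :
    |gAux m0 M s - t| = 1 := by
  rw [abs_eq (by norm_num : (0:ℤ) ≤ 1)]
  unfold gAux
  split_ifs <;> omega

lemma gAux_mem (m0 M : ℤ) (h3 : m0 + 3 ≤ M) (t : ℤ) :
    m0 + 1 ≤ gAux m0 M t ∧ gAux m0 M t ≤ M - 1 := by
  unfold gAux
  split_ifs <;> omega

lemma gAux_top (m0 M : ℤ) (h3 : m0 + 3 ≤ M) {s : ℤ}
    (h : s = M - 1 ∨ s = M + 1) : gAux m0 M s = M - 1 := by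
  unfold gAux
  split_ifs <;> omega

lemma gAux_bot (m0 M : ℤ) (h3 : m0 + 3 ≤ M) {s : ℤ}
    (h : s = m0 - 1 ∨ s = m0 + 1) : gAux m0 M s = m0 + 1 := by
  unfold gAux
  split_ifs <;> omega

lemma adjacent_symm' {d : ℕ} {n m : Site d} (h : adjacent n m) : adjacent m n := by
  unfold adjacent at *
  simpa [abs_sub_comm] using h

lemma neighbors_finite {d : ℕ} (n : Site d) : {m : Site d | adjacent n m}.Finite := by
  have hsub : {m : Site d | adjacent n m} ⊆
      Set.pi Set.univ (fun i => Set.Icc (n i - 1) (n i + 1)) := by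
    intro m hm i _
    have h1 : |n i - m i| ≤ ∑ j, |n j - m j| :=
      Finset.single_le_sum (f := fun j => |n j - m j|) (fun j _ => abs_nonneg _)
        (Finset.mem_univ i)
    rw [hm] at h1
    rw [Set.mem_Icc]
    rcases abs_le.1 h1 with ⟨ha, hb⟩
    constructor <;> linarith
  exact (Set.Finite.pi (fun i => Set.finite_Icc _ _)).subset hsub

lemma siteBdry_finite {d : ℕ} {F : Set (Site d)} (hF : F.Finite) :
    (siteBdry F).Finite := by
  have hsub : siteBdry F ⊆ ⋃ n ∈ F, {m : Site d | adjacent n m} := by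
    rintro m ⟨-, n, hn, hadj⟩
    exact Set.mem_biUnion hn hadj
  exact (Set.Finite.biUnion hF (fun n _ => neighbors_finite n)).subset hsub

/-- For `d ≥ 2`, a finite `F ⊆ ℤ^d` and a height function `x̂` with
`Range_{∂F}(x̂) > 2`, there is a height function `ŷ` agreeing with `x̂` off `F` such that
`Range_F(ŷ) = Range_{∂F}(ŷ) - 2 = Range_{∂F}(x̂) - 2`. -/
theorem steep_to_flat
    (d : ℕ) (hd : 2 ≤ d) (F : Set (Site d)) (hF : F.Finite)
    (xh : Site d → ℤ) (hx : IsHeightFn xh)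
    (hrange : 2 < RangeOn xh (siteBdry F)) :
    ∃ yh : Site d → ℤ, IsHeightFn yh ∧ (∀ n ∉ F, yh n = xh n) ∧
      RangeOn yh F = RangeOn yh (siteBdry F) - 2 ∧
      RangeOn yh (siteBdry F) = RangeOn xh (siteBdry F) := by
  classical
  have hBfin : (siteBdry F).Finite := siteBdry_finite hF
  have hBne : (siteBdry F).Nonempty := by
    by_contra h
    rw [Set.not_nonempty_iff_eq_empty] at h
    rw [RangeOn, h, Set.image_empty, Int.csSup_empty, Int.csInf_empty] at hrange
    omega
  set S : Set ℤ := xh '' siteBdry F with hS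
  have hSne : S.Nonempty := hBne.image _
  have hSfin : S.Finite := hBfin.image _
  set M : ℤ := sSup S with hMdef
  set m0 : ℤ := sInf S with hm0def
  have hMmem : M ∈ S := hSne.csSup_mem hSfin
  have hmmem : m0 ∈ S := hSne.csInf_mem hSfin
  have h3 : m0 + 3 ≤ M := by
    rw [RangeOn, ← hS, ← hMdef, ← hm0def] at hrange
    omega
  have hub : ∀ b ∈ siteBdry F, xh b ≤ M :=
    fun b hb => le_csSup hSfin.bddAbove ⟨b, hb, rfl⟩
  have hlb : ∀ b ∈ siteBdry F, m0 ≤ xh b :=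
    fun b hb => csInf_le hSfin.bddBelow ⟨b, hb, rfl⟩
  set yh : Site d → ℤ := fun n => if n ∈ F then gAux m0 M (xh n) else xh n with hy
  have hyoff : ∀ n ∉ F, yh n = xh n := fun n hn => if_neg hn
  have habs : ∀ a b : ℤ, |a - b| = 1 → (a - b = 1 ∨ a - b = -1) := by
    intro a b h
    rcases (abs_eq (by norm_num : (0:ℤ) ≤ 1)).1 h with h' | h' <;> omega
  -- yh is a height function
  have hheight : IsHeightFn yh := by
    intro n m hadj
    have hd1 : xh n - xh m = 1 ∨ xh n - xh m = -1 := habs _ _ (hx n m hadj)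
    by_cases hn : n ∈ F <;> by_cases hm : m ∈ F
    · simp only [hy, if_pos hn, if_pos hm]
      exact gAux_diff m0 M h3 hd1
    · have hmB : m ∈ siteBdry F := ⟨hm, n, hn, hadj⟩
      simp only [hy, if_pos hn, if_neg hm]
      exact gAux_bdry m0 M h3 hd1 (hlb m hmB) (hub m hmB)
    · have hnB : n ∈ siteBdry F := ⟨hn, m, hm, adjacent_symm' hadj⟩
      simp only [hy, if_neg hn, if_pos hm]
      have : |gAux m0 M (xh m) - xh n| = 1 :=
        gAux_bdry m0 M h3 (by omega) (hlb n hnB) (hub n hnB)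
      rw [abs_sub_comm] at this
      exact this
    · simp only [hy, if_neg hn, if_neg hm]
      exact hx n m hadj
  -- image of boundary unchanged
  have himg : yh '' siteBdry F = xh '' siteBdry F :=
    Set.image_congr fun a ha => hyoff a ha.1
  have hRB : RangeOn yh (siteBdry F) = RangeOn xh (siteBdry F) := by
    rw [RangeOn, RangeOn, himg]
  -- F is nonempty
  obtain ⟨b0, hb0⟩ := hBne
  obtain ⟨n0, hn0F, -⟩ := hb0.2
  have hFne : F.Nonempty := ⟨n0, hn0F⟩
  -- yh attains M - 1 on F
  obtain ⟨bmax, hbmaxB, hbmaxV⟩ := hMmem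
  obtain ⟨nmax, hnmaxF, hnmaxAdj⟩ := hbmaxB.2
  have hxnmax : xh nmax = M - 1 ∨ xh nmax = M + 1 := by
    have := habs _ _ (hx nmax bmax hnmaxAdj)
    omega
  have hyMax : yh nmax = M - 1 := by
    rw [hy]
    simp only [if_pos hnmaxF]
    exact gAux_top m0 M h3 hxnmax
  -- yh attains m0 + 1 on F
  obtain ⟨bmin, hbminB, hbminV⟩ := hmmem
  obtain ⟨nmin, hnminF, hnminAdj⟩ := hbminB.2
  have hxnmin : xh nmin = m0 - 1 ∨ xh nmin = m0 + 1 := by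
    have := habs _ _ (hx nmin bmin hnminAdj)
    omega
  have hymin : yh nmin = m0 + 1 := by
    rw [hy]
    simp only [if_pos hnminF]
    exact gAux_bot m0 M h3 hxnmin
  -- bounds of yh on F
  have hybd : ∀ n ∈ F, m0 + 1 ≤ yh n ∧ yh n ≤ M - 1 := by
    intro n hn
    rw [hy]
    simp only [if_pos hn]
    exact gAux_mem m0 M h3 _
  have hYFne : (yh '' F).Nonempty := hFne.image _
  have hYFfin : (yh '' F).Finite := hF.image _
  have hsupF : sSup (yh '' F) = M - 1 := by
    apply le_antisymm
    · apply csSup_le hYFne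
      rintro v ⟨n, hn, rfl⟩
      exact (hybd n hn).2
    · exact le_csSup hYFfin.bddAbove ⟨nmax, hnmaxF, hyMax⟩
  have hinfF : sInf (yh '' F) = m0 + 1 := by
    apply le_antisymm
    · exact csInf_le hYFfin.bddBelow ⟨nmin, hnminF, hymin⟩
    · apply le_csInf hYFne
      rintro v ⟨n, hn, rfl⟩
      exact (hybd n hn).1
  refine ⟨yh, hheight, hyoff, ?_, hRB⟩
  rw [RangeOn, hsupF, hinfF, hRB, RangeOn, ← hS, ← hMdef, ← hm0def]
  omega
end
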